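/- arXiv:2605.20629 — 3 statements merged into one kernel-verified Lean document; each statement's English description precedes it below -/
import Mathlib

section
/- Let A be a finite set with n = |A| ≥ 3 and let a_1, a_2 ∈ A be distinct. For each i ∈ {1,2}, let D_i be a maximal ASPD on A∖{a_i} such that a_{3−i} is a bottom alternative of D_i. Define D_{12} := {ω_{A∖{a_1,a_2}} : ω ∈ D_1, ω(n−1) = a_2} and D_{21} := {ω_{A∖{a_1,a_2}} : ω ∈ D_2, ω(n−1) = a_1}, and suppose D_{12} = D_{21}. Then: (1) for every 3-element subset T ⊆ A∖{a_1,a_2} and every x ∈ T, x is not a bottom alternative of (D_1)_T if and only if x is not a bottom alternative of (D_2)_T; (2) the domain D := {ω ∈ L(A) : ω(n) = a_1 and ω_{A∖{a_1}} ∈ D_1} ∪ {ω ∈ L(A) : ω(n) = a_2 and ω_{A∖{a_2}} ∈ D_2} is a maximal ASPD on A. -/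
variable {α : Type*} [DecidableEq α]

/-- Preferences (linear orders written as lists, most preferred first) on `A`. -/
def PrefOn (A : Finset α) : Set (List α) :=
  {l | l.Nodup ∧ l.toFinset = A}

/-- Restriction of a preference to a subset `T`. -/
def restrictPref (l : List α) (T : Finset α) : List α :=
  l.filter (fun a => decide (a ∈ T))

/-- Arrow's single-peaked domain on `A`: for every triple `T ⊆ A` some `x ∈ T`
is never ranked last in the restriction of the domain to `T`. -/
def IsASPD (A : Finset α) (D : Set (List α)) : Prop :=
  D ⊆ PrefOn A ∧
    ∀ T : Finset α, T ⊆ A → T.card = 3 →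
      ∃ x ∈ T, ∀ l ∈ D, (restrictPref l T).getLast? ≠ some x

/-- Maximal Arrow's single-peaked domain on `A`. -/
def IsMaximalASPD (A : Finset α) (D : Set (List α)) : Prop :=
  IsASPD A D ∧ ∀ l ∈ PrefOn A, l ∉ D → ¬ IsASPD A (insert l D)

lemma restrict_restrict (l : List α) {S T : Finset α} (hTS : T ⊆ S) :
    restrictPref (restrictPref l S) T = restrictPref l T := by
  unfold restrictPref
  rw [List.filter_filter]
  refine List.filter_congr ?_
  intro x _
  by_cases hx : x ∈ T
  · simp [hx, hTS hx]
  · simp [hx]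
lemma getLast?_restrict {l : List α} {a : α} (h : l.getLast? = some a) {T : Finset α}
    (ha : a ∈ T) : (restrictPref l T).getLast? = some a := by
  obtain ⟨ys, rfl⟩ := List.getLast?_eq_some_iff.1 h
  unfold restrictPref
  rw [List.filter_append]
  simp [ha]
lemma restrict_concat_not_mem (l : List α) {b : α} {T : Finset α} (hb : b ∉ T) :
    restrictPref (l ++ [b]) T = restrictPref l T := by
  unfold restrictPref
  rw [List.filter_append]
  simp [hb]
lemma restrict_erase (l : List α) {b : α} {T : Finset α} (hb : b ∉ T) :
    restrictPref (l.erase b) T = restrictPref l T := by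
  by_cases hbl : b ∈ l
  · obtain ⟨l₁, l₂, _, h2, h3⟩ := List.exists_erase_eq hbl
    rw [h3, h2]
    unfold restrictPref
    simp [List.filter_append, hb]
  · rw [List.erase_of_not_mem hbl]
lemma restrict_eq_self {l : List α} {T : Finset α} (h : ∀ a ∈ l, a ∈ T) :
    restrictPref l T = l :=
  List.filter_eq_self.2 fun a ha => by simp [h a ha]
lemma restrict_mem_prefOn {l : List α} {A : Finset α} (hl : l ∈ PrefOn A)
    {S : Finset α} (hS : S ⊆ A) : restrictPref l S ∈ PrefOn S := by
  obtain ⟨hnd, hts⟩ := hl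
  refine ⟨hnd.filter _, ?_⟩
  unfold restrictPref
  rw [List.toFinset_filter, hts]
  ext x
  simp only [Finset.mem_filter, decide_eq_true_eq]
  exact ⟨fun h => h.2, fun h => ⟨hS h, h⟩⟩
lemma concat_prefOn {A : Finset α} {a : α} (ha : a ∈ A) {m : List α}
    (hm : m ∈ PrefOn (A.erase a)) :
    m ++ [a] ∈ PrefOn A ∧ restrictPref (m ++ [a]) (A.erase a) = m := by
  obtain ⟨hnd, hts⟩ := hm
  have hmem : ∀ x ∈ m, x ∈ A.erase a := fun x hx => hts ▸ List.mem_toFinset.2 hx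
  have hna : a ∉ m := fun h => Finset.notMem_erase a A (hmem a h)
  constructor
  · constructor
    · rw [List.nodup_append]
      exact ⟨hnd, List.nodup_singleton a, by
        intro x hx y hy; rw [List.mem_singleton] at hy; rw [hy]; rintro rfl; exact hna hx⟩
    · rw [List.toFinset_append, hts]
      rw [Finset.union_comm]
      simpa using Finset.insert_erase ha
  · rw [restrict_concat_not_mem _ (Finset.notMem_erase a A)]
    exact restrict_eq_self hmem
lemma push_bottom {B : Finset α} {D : Set (List α)} (hD : IsMaximalASPD B D)
    {b : α} {ω : List α} (hω : ω ∈ D) (hωb : ω.getLast? = some b)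
    {l : List α} (hl : l ∈ D) : l.erase b ++ [b] ∈ D := by
  obtain ⟨hnd, hts⟩ := hD.1.1 hl
  have hbB : b ∈ B := by
    rw [← (hD.1.1 hω).2]
    exact List.mem_toFinset.2 (List.mem_of_getLast? hωb)
  have hbl : b ∈ l := by rw [← List.mem_toFinset, hts]; exact hbB
  set l' := l.erase b ++ [b] with hl'
  by_contra hnot
  have hl'P : l' ∈ PrefOn B := by
    constructor
    · rw [List.nodup_append]
      exact ⟨hnd.erase b, List.nodup_singleton b,
        by simp [hnd.mem_erase_iff]; exact fun a h _ => h⟩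
    · rw [List.toFinset_append]
      have : (l.erase b).toFinset = l.toFinset.erase b := by
        ext x; simp [hnd.mem_erase_iff, Finset.mem_erase, and_comm]
      rw [this, hts]
      simp only [List.toFinset_cons, List.toFinset_nil, insert_empty_eq]
      rw [Finset.union_comm]
      simpa using Finset.insert_erase hbB
  refine hD.2 l' hl'P hnot ⟨?_, ?_⟩
  · intro m hm
    rcases hm with rfl | hm
    · exact hl'P
    · exact hD.1.1 hm
  · intro T hT hT3
    obtain ⟨x, hxT, hx⟩ := hD.1.2 T hT hT3
    refine ⟨x, hxT, ?_⟩
    intro m hm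
    rcases hm with rfl | hm
    · by_cases hbT : b ∈ T
      · rw [getLast?_restrict (List.getLast?_concat) hbT]
        intro h
        exact hx ω hω (by rw [getLast?_restrict hωb hbT, Option.some_inj.1 h])
      · rw [restrict_concat_not_mem _ hbT, restrict_erase _ hbT]
        exact hx l hl
    · exact hx m hm
lemma get?_last {A : Finset α} {a : α} (ha : a ∈ A) {l : List α}
    (hl : l ∈ PrefOn (A.erase a)) : l[A.card - 2]? = l.getLast? := by
  have hlen : l.length = A.card - 1 := by
    rw [← List.toFinset_card_of_nodup hl.1, hl.2, Finset.card_erase_of_mem ha]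
  rw [List.getLast?_eq_getElem?, hlen]
  rfl
lemma bottom_iff_merge {A : Finset α} {a b : α} (ha : a ∈ A)
    {D : Set (List α)} (hD : IsMaximalASPD (A.erase a) D)
    (hbD : ∃ ω ∈ D, ω.getLast? = some b)
    {S T : Finset α} (hTS : T ⊆ S) (hbT : b ∉ T) {x : α} :
    (∃ l ∈ D, (restrictPref l T).getLast? = some x) ↔
      ∃ m ∈ {m | ∃ l ∈ D, l[A.card - 2]? = some b ∧ m = restrictPref l S},
        (restrictPref m T).getLast? = some x := by
  constructor
  · rintro ⟨l, hl, hlast⟩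
    obtain ⟨ω, hω, hωb⟩ := hbD
    have hmem := push_bottom hD hω hωb hl
    refine ⟨restrictPref (l.erase b ++ [b]) S, ⟨l.erase b ++ [b], hmem, ?_, rfl⟩, ?_⟩
    · rw [get?_last ha (hD.1.1 hmem)]
      exact List.getLast?_concat
    · rw [restrict_restrict _ hTS, restrict_concat_not_mem _ hbT, restrict_erase _ hbT]
      exact hlast
  · rintro ⟨m, ⟨l, hl, _, rfl⟩, hlast⟩
    exact ⟨l, hl, by rwa [restrict_restrict _ hTS] at hlast⟩
lemma insert_not_aspd {A : Finset α} {a : α} {Da : Set (List α)}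
    (hDa : IsMaximalASPD (A.erase a) Da) {D : Set (List α)}
    (hext : ∀ m ∈ Da, m ++ [a] ∈ D)
    {l : List α} (hl : l ∈ PrefOn A)
    (hnot : restrictPref l (A.erase a) ∉ Da) : ¬ IsASPD A (insert l D) := by
  intro hasp
  have hl'P : restrictPref l (A.erase a) ∈ PrefOn (A.erase a) :=
    restrict_mem_prefOn hl (Finset.erase_subset _ _)
  refine hDa.2 _ hl'P hnot ⟨?_, ?_⟩
  · intro m hm
    rcases hm with rfl | hm
    · exact hl'P
    · exact hDa.1.1 hm
  · intro T hT hT3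
    obtain ⟨x, hxT, hx⟩ := hasp.2 T (hT.trans (Finset.erase_subset _ _)) hT3
    refine ⟨x, hxT, ?_⟩
    have haT : a ∉ T := fun h => Finset.notMem_erase a A (hT h)
    intro m hm
    rcases hm with rfl | hm
    · rw [restrict_restrict _ hT]
      exact hx l (Set.mem_insert _ _)
    · intro hcon
      refine hx (m ++ [a]) (Set.mem_insert_of_mem _ (hext m hm)) ?_
      rwa [restrict_concat_not_mem _ haT]
lemma triple_side {A : Finset α} {a b : α}
    {Db : Set (List α)} (hDb : IsASPD (A.erase b) Db)
    (hwit : ∃ ω ∈ Db, ω.getLast? = some a)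
    {T : Finset α} (hT : T ⊆ A.erase b) (hT3 : T.card = 3) (haT : a ∈ T) :
    ∃ x ∈ T, x ≠ a ∧ ∀ m ∈ Db, (restrictPref m T).getLast? ≠ some x := by
  obtain ⟨x, hxT, hx⟩ := hDb.2 T hT hT3
  refine ⟨x, hxT, ?_, hx⟩
  obtain ⟨ω, hω, hωa⟩ := hwit
  rintro rfl
  exact hx ω hω (getLast?_restrict hωa haT)

/-- Merging maximal Arrow's single-peaked domains: if `D₁`, `D₂` are maximal
ASPDs on `A ∖ {a₁}`, `A ∖ {a₂}`, each having the other deleted alternative as a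
bottom alternative, and `D₁₂ = D₂₁`, then (1) for every triple
`T ⊆ A ∖ {a₁, a₂}` and `x ∈ T`, `x` is not bottom in `(D₁)_T` iff `x` is not
bottom in `(D₂)_T`, and (2) the merged domain is a maximal ASPD on `A`. -/
theorem maximal_aspd_merging (A : Finset α) (hA : 3 ≤ A.card) (a₁ a₂ : α)
    (ha₁ : a₁ ∈ A) (ha₂ : a₂ ∈ A) (hne : a₁ ≠ a₂)
    (D₁ D₂ : Set (List α))
    (hD₁ : IsMaximalASPD (A.erase a₁) D₁) (hD₂ : IsMaximalASPD (A.erase a₂) D₂)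
    (hb₁ : ∃ l ∈ D₁, l.getLast? = some a₂) (hb₂ : ∃ l ∈ D₂, l.getLast? = some a₁)
    (hmerge :
      {m | ∃ l ∈ D₁, l[A.card - 2]? = some a₂ ∧ m = restrictPref l (A \ {a₁, a₂})} =
      {m | ∃ l ∈ D₂, l[A.card - 2]? = some a₁ ∧ m = restrictPref l (A \ {a₁, a₂})}) :
    (∀ T : Finset α, T ⊆ A \ {a₁, a₂} → T.card = 3 → ∀ x ∈ T,
      ((¬ ∃ l ∈ D₁, (restrictPref l T).getLast? = some x) ↔
        (¬ ∃ l ∈ D₂, (restrictPref l T).getLast? = some x))) ∧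
    IsMaximalASPD A
      {l | l ∈ PrefOn A ∧
        ((l.getLast? = some a₁ ∧ restrictPref l (A.erase a₁) ∈ D₁) ∨
          (l.getLast? = some a₂ ∧ restrictPref l (A.erase a₂) ∈ D₂))} := by
  set D : Set (List α) :=
    {l | l ∈ PrefOn A ∧
        ((l.getLast? = some a₁ ∧ restrictPref l (A.erase a₁) ∈ D₁) ∨
          (l.getLast? = some a₂ ∧ restrictPref l (A.erase a₂) ∈ D₂))} with hDdef
  have hsub : D ⊆ PrefOn A := fun l hl => hl.1
  have hext₁ : ∀ m ∈ D₁, m ++ [a₁] ∈ D := by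
    intro m hm
    obtain ⟨h1, h2⟩ := concat_prefOn ha₁ (hD₁.1.1 hm)
    exact ⟨h1, Or.inl ⟨List.getLast?_concat, by rw [h2]; exact hm⟩⟩
  have hext₂ : ∀ m ∈ D₂, m ++ [a₂] ∈ D := by
    intro m hm
    obtain ⟨h1, h2⟩ := concat_prefOn ha₂ (hD₂.1.1 hm)
    exact ⟨h1, Or.inr ⟨List.getLast?_concat, by rw [h2]; exact hm⟩⟩
  have part1 : ∀ T : Finset α, T ⊆ A \ {a₁, a₂} → T.card = 3 → ∀ x ∈ T,
      ((¬ ∃ l ∈ D₁, (restrictPref l T).getLast? = some x) ↔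
        (¬ ∃ l ∈ D₂, (restrictPref l T).getLast? = some x)) := by
    intro T hT hT3 x hx
    have h1T : a₁ ∉ T := fun h => by
      have := hT h; rw [Finset.mem_sdiff] at this; simp at this
    have h2T : a₂ ∉ T := fun h => by
      have := hT h; rw [Finset.mem_sdiff] at this; simp at this
    have key : (∃ l ∈ D₁, (restrictPref l T).getLast? = some x) ↔
        (∃ l ∈ D₂, (restrictPref l T).getLast? = some x) := by
      rw [bottom_iff_merge ha₁ hD₁ hb₁ hT h2T, hmerge,
        ← bottom_iff_merge ha₂ hD₂ hb₂ hT h1T]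
    exact not_congr key
  refine ⟨part1, ⟨⟨hsub, ?_⟩, ?_⟩⟩
  · -- triple condition for D
    intro T hTA hT3
    by_cases h1 : a₁ ∈ T <;> by_cases h2 : a₂ ∈ T
    · -- both in T
      have hns : ¬ T ⊆ {a₁, a₂} := by
        intro h
        have := Finset.card_le_card h
        rw [hT3, Finset.card_pair hne] at this
        omega
      obtain ⟨c, hcT, hc⟩ := Finset.not_subset.1 hns
      simp only [Finset.mem_insert, Finset.mem_singleton, not_or] at hc
      refine ⟨c, hcT, ?_⟩
      rintro l ⟨_, ⟨hlast, _⟩ | ⟨hlast, _⟩⟩ hcon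
      · rw [getLast?_restrict hlast h1] at hcon
        exact hc.1 (Option.some_inj.1 hcon).symm
      · rw [getLast?_restrict hlast h2] at hcon
        exact hc.2 (Option.some_inj.1 hcon).symm
    · -- a₁ ∈ T, a₂ ∉ T
      have hTe : T ⊆ A.erase a₂ := Finset.subset_erase.2 ⟨hTA, h2⟩
      obtain ⟨x, hxT, hxa, hx⟩ := triple_side hD₂.1 hb₂ hTe hT3 h1
      refine ⟨x, hxT, ?_⟩
      rintro l ⟨_, ⟨hlast, _⟩ | ⟨_, hmem⟩⟩ hcon
      · rw [getLast?_restrict hlast h1] at hcon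
        exact hxa (Option.some_inj.1 hcon).symm
      · rw [← restrict_restrict l hTe] at hcon
        exact hx _ hmem hcon
    · -- a₂ ∈ T, a₁ ∉ T
      have hTe : T ⊆ A.erase a₁ := Finset.subset_erase.2 ⟨hTA, h1⟩
      obtain ⟨x, hxT, hxa, hx⟩ := triple_side hD₁.1 hb₁ hTe hT3 h2
      refine ⟨x, hxT, ?_⟩
      rintro l ⟨_, ⟨_, hmem⟩ | ⟨hlast, _⟩⟩ hcon
      · rw [← restrict_restrict l hTe] at hcon
        exact hx _ hmem hcon
      · rw [getLast?_restrict hlast h2] at hcon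
        exact hxa (Option.some_inj.1 hcon).symm
    · -- neither
      have hTs : T ⊆ A \ {a₁, a₂} := by
        intro x hx
        rw [Finset.mem_sdiff]
        refine ⟨hTA hx, ?_⟩
        simp only [Finset.mem_insert, Finset.mem_singleton, not_or]
        exact ⟨fun h => h1 (h ▸ hx), fun h => h2 (h ▸ hx)⟩
      have hTe₁ : T ⊆ A.erase a₁ := Finset.subset_erase.2 ⟨hTA, h1⟩
      have hTe₂ : T ⊆ A.erase a₂ := Finset.subset_erase.2 ⟨hTA, h2⟩
      obtain ⟨x, hxT, hx1⟩ := hD₁.1.2 T hTe₁ hT3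
      have hx2 : ¬ ∃ l ∈ D₂, (restrictPref l T).getLast? = some x :=
        (part1 T hTs hT3 x hxT).1 (by push_neg; exact hx1)
      refine ⟨x, hxT, ?_⟩
      rintro l ⟨_, ⟨_, hmem⟩ | ⟨_, hmem⟩⟩ hcon
      · rw [← restrict_restrict l hTe₁] at hcon
        exact hx1 _ hmem hcon
      · rw [← restrict_restrict l hTe₂] at hcon
        exact hx2 ⟨_, hmem, hcon⟩
  · -- maximality
    intro l hlP hlD
    have hlne : l ≠ [] := by
      intro h
      rw [h] at hlP
      have := hlP.2
      simp only [List.toFinset_nil] at this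
      rw [← this] at hA
      simp at hA
    obtain ⟨b, hb⟩ : ∃ b, l.getLast? = some b := by
      cases h : l.getLast? with
      | none => exact absurd (List.getLast?_eq_none_iff.1 h) hlne
      | some b => exact ⟨b, rfl⟩
    by_cases hb1 : b = a₁
    · subst hb1
      refine insert_not_aspd hD₁ hext₁ hlP ?_
      intro hmem
      exact hlD ⟨hlP, Or.inl ⟨hb, hmem⟩⟩
    by_cases hb2 : b = a₂
    · subst hb2
      refine insert_not_aspd hD₂ hext₂ hlP ?_
      intro hmem
      exact hlD ⟨hlP, Or.inr ⟨hb, hmem⟩⟩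
    · -- b ∉ {a₁, a₂} : use the triple {a₁, a₂, b}
      have hbA : b ∈ A := by
        rw [← hlP.2]
        exact List.mem_toFinset.2 (List.mem_of_getLast? hb)
      intro hasp
      have hTA : ({a₁, a₂, b} : Finset α) ⊆ A := by
        intro x hx
        simp only [Finset.mem_insert, Finset.mem_singleton] at hx
        rcases hx with rfl | rfl | rfl <;> assumption
      have hT3 : ({a₁, a₂, b} : Finset α).card = 3 := by
        rw [Finset.card_insert_of_notMem (by simp [hne, Ne.symm hb1]),
          Finset.card_insert_of_notMem (by simp [Ne.symm hb2])]
        rfl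
      obtain ⟨x, hxT, hx⟩ := hasp.2 {a₁, a₂, b} hTA hT3
      have hm1 : a₁ ∈ ({a₁, a₂, b} : Finset α) := by simp
      have hm2 : a₂ ∈ ({a₁, a₂, b} : Finset α) := by simp
      have hmb : b ∈ ({a₁, a₂, b} : Finset α) := by simp
      simp only [Finset.mem_insert, Finset.mem_singleton] at hxT
      rcases hxT with rfl | rfl | rfl
      · obtain ⟨ω, hω, _⟩ := hb₁
        exact hx (ω ++ [x]) (Set.mem_insert_of_mem _ (hext₁ ω hω))
          (getLast?_restrict (List.getLast?_concat) hm1)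
      · obtain ⟨ω, hω, _⟩ := hb₂
        exact hx (ω ++ [x]) (Set.mem_insert_of_mem _ (hext₂ ω hω))
          (getLast?_restrict (List.getLast?_concat) hm2)
      · exact hx l (Set.mem_insert _ _) (getLast?_restrict hb hmb)
end

section
/- Let D be a maximal ASPD on a finite set A with n = |A| ≥ 3 that is also a BSPD (so D is a maximal BSPD), let a_1, a_2 be its two bottom alternatives, and define D_1 := {ω_{A∖{a_1}} : ω ∈ D, ω(n) = a_1}, D_2 := {ω_{A∖{a_2}} : ω ∈ D, ω(n) = a_2}, and D' := {ω_{A∖{a_1,a_2}} : ω ∈ D, ω(n) = a_1, ω(n−1) = a_2}. Then each of D_1, D_2, D' is again a BSPD (and hence, being a maximal ASPD, a maximal BSPD). -/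
variable {α : Type*} [DecidableEq α]

/-- Black's single-peaked domain on `A`: there is a societal axis (a path
graph on `A`, given by an enumeration `p` of `A`) such that whenever `a` lies
on the path from the top alternative of `ω` to `b`, `ω` ranks `a` above `b`. -/
def IsBSPD (A : Finset α) (D : Set (List α)) : Prop :=
  D ⊆ PrefOn A ∧
  ∃ p : List α, p.Nodup ∧ p.toFinset = A ∧
    ∀ l ∈ D, ∀ a ∈ A, ∀ b ∈ A, a ≠ b →
      ∀ h, l.head? = some h →
        ((p.idxOf h ≤ p.idxOf a ∧ p.idxOf a ≤ p.idxOf b) ∨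
          (p.idxOf b ≤ p.idxOf a ∧ p.idxOf a ≤ p.idxOf h)) →
        l.idxOf a < l.idxOf b

/-- Maximal Black's single-peaked domain on `A`. -/
def IsMaximalBSPD (A : Finset α) (D : Set (List α)) : Prop :=
  IsBSPD A D ∧ ∀ l ∈ PrefOn A, l ∉ D → ¬ IsBSPD A (insert l D)

/-- The domain `D_i` obtained from `D` by restricting the preferences ending in
the bottom alternative `a` to `A ∖ {a}`. -/
def bottomRestrict (A : Finset α) (D : Set (List α)) (a : α) : Set (List α) :=
  {m | ∃ l ∈ D, l.getLast? = some a ∧ m = restrictPref l (A.erase a)}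

/-- The domain `D_{ij}` obtained from `D` by restricting the preferences with
last alternative `a₁` and second-to-last alternative `a₂` to `A ∖ {a₁, a₂}`. -/
def bottom2Restrict (A : Finset α) (D : Set (List α)) (a₁ a₂ : α) : Set (List α) :=
  {m | ∃ l ∈ D, l.getLast? = some a₁ ∧ l[A.card - 2]? = some a₂ ∧
    m = restrictPref l (A \ {a₁, a₂})}

theorem SPX_filter_idx {P : α → Bool} : ∀ (l : List α), l.Nodup →
    ∀ a b, a ∈ l.filter P → b ∈ l.filter P → l.idxOf a < l.idxOf b →
    (l.filter P).idxOf a < (l.filter P).idxOf b := by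
  intro l
  induction l with
  | nil => simp
  | cons c t ih =>
    intro hnd a b ha hb hlt
    have hndt := hnd.of_cons
    by_cases hPc : P c
    · rw [List.filter_cons_of_pos hPc] at ha hb ⊢
      by_cases hac : a = c
      · subst hac
        have hab : a ≠ b := fun h => by subst h; exact lt_irrefl _ hlt
        rw [List.idxOf_cons_eq _ rfl, List.idxOf_cons_ne _ hab]
        exact Nat.succ_pos _
      · by_cases hbc : b = c
        · subst hbc
          rw [List.idxOf_cons_eq _ rfl] at hlt
          omega
        · have ha' : a ∈ t.filter P := by
            rcases List.mem_cons.1 ha with h | h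
            · exact absurd h hac
            · exact h
          have hb' : b ∈ t.filter P := by
            rcases List.mem_cons.1 hb with h | h
            · exact absurd h hbc
            · exact h
          rw [List.idxOf_cons_ne _ (Ne.symm hac), List.idxOf_cons_ne _ (Ne.symm hbc)] at hlt ⊢
          have := ih hndt a b ha' hb' (by omega)
          omega
    · rw [List.filter_cons_of_neg hPc] at ha hb ⊢
      have hac : a ≠ c := fun h => hPc (h ▸ (List.mem_filter.1 ha).2)
      have hbc : b ≠ c := fun h => hPc (h ▸ (List.mem_filter.1 hb).2)
      rw [List.idxOf_cons_ne _ (Ne.symm hac), List.idxOf_cons_ne _ (Ne.symm hbc)] at hlt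
      exact ih hndt a b ha hb (by omega)

theorem SPX_last_idx_max {l : List α} (hnd : l.Nodup) {y : α}
    (hy : l.getLast? = some y) {z : α} (hz : z ∈ l) : l.idxOf z ≤ l.idxOf y := by
  have hdec : l.dropLast ++ [y] = l := List.dropLast_append_getLast? y hy
  have hyn : y ∉ l.dropLast := by
    intro hmem
    have h2 := hdec ▸ hnd
    rw [List.nodup_append] at h2
    exact h2.2.2 _ hmem _ (by simp) rfl
  have h1 : l.idxOf y = l.dropLast.length := by
    conv_lhs => rw [← hdec]
    rw [List.idxOf_append_of_notMem hyn]; simp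
  have h2 : l.idxOf z < l.length := List.idxOf_lt_length_iff.2 hz
  have h3 : l.length = l.dropLast.length + 1 := by
    conv_lhs => rw [← hdec]
    simp
  omega

def SPX_Black (p l : List α) : Prop :=
  ∀ a ∈ p, ∀ b ∈ p, a ≠ b → ∀ h, l.head? = some h →
    ((p.idxOf h ≤ p.idxOf a ∧ p.idxOf a ≤ p.idxOf b) ∨
     (p.idxOf b ≤ p.idxOf a ∧ p.idxOf a ≤ p.idxOf h)) →
    l.idxOf a < l.idxOf b

def SPX_SPD (p : List α) : Set (List α) := {l | l ∈ PrefOn p.toFinset ∧ SPX_Black p l}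

theorem SPX_prefOn_finite (A : Finset α) : (PrefOn A).Finite := by
  apply Set.Finite.subset (List.finite_toSet A.toList.permutations)
  intro l hl
  simp only [Set.mem_setOf_eq, List.mem_permutations]
  have h1 : l.toFinset = A.toList.toFinset := by rw [hl.2, Finset.toList_toFinset]
  have := List.toFinset_eq_iff_perm_dedup.1 h1
  rwa [hl.1.dedup, (Finset.nodup_toList A).dedup] at this

theorem SPX_indexOf_map {f : α → α} (hf : Function.Injective f) (a : α) :
    ∀ l : List α, (l.map f).idxOf (f a) = l.idxOf a := by
  intro l; induction l with
  | nil => rfl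
  | cons c t ih =>
    by_cases h : c = a
    · subst h; simp [List.idxOf_cons_eq]
    · rw [List.map_cons, List.idxOf_cons_ne _ h, List.idxOf_cons_ne _ (fun he => h (hf he)), ih]

def SPX_rel (p r : List α) (a : α) : α := if a ∈ p then r.getD (p.idxOf a) a else a

theorem SPX_len {p r : List α} (hp : p.Nodup) (hr : r.Nodup) (hpr : p.toFinset = r.toFinset) :
    p.length = r.length := by
  rw [← List.toFinset_card_of_nodup hp, ← List.toFinset_card_of_nodup hr, hpr]

theorem SPX_mem_iff {p r : List α} (hpr : p.toFinset = r.toFinset) {a : α} : a ∈ p ↔ a ∈ r := by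
  rw [← List.mem_toFinset, hpr, List.mem_toFinset]

theorem SPX_rel_spec {p r : List α} (hp : p.Nodup) (hr : r.Nodup)
    (hpr : p.toFinset = r.toFinset) {a : α} (ha : a ∈ p) :
    SPX_rel p r a ∈ r ∧ r.idxOf (SPX_rel p r a) = p.idxOf a := by
  have h1 : p.idxOf a < p.length := List.idxOf_lt_length_iff.2 ha
  have h2 : p.idxOf a < r.length := by rw [← SPX_len hp hr hpr]; exact h1
  have he : SPX_rel p r a = r[p.idxOf a] := by
    rw [SPX_rel, if_pos ha, List.getD_eq_getElem _ _ h2]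
  rw [he]
  exact ⟨List.getElem_mem _, List.Nodup.idxOf_getElem hr _ _⟩

theorem SPX_rel_inj {p r : List α} (hp : p.Nodup) (hr : r.Nodup)
    (hpr : p.toFinset = r.toFinset) : Function.Injective (SPX_rel p r) := by
  intro a b hab
  by_cases ha : a ∈ p <;> by_cases hb : b ∈ p
  · have h1 := SPX_rel_spec hp hr hpr ha
    have h2 := SPX_rel_spec hp hr hpr hb
    rw [hab] at h1
    exact (List.idxOf_inj ha).1 (h1.2 ▸ h2.2 ▸ rfl)
  · have h1 := (SPX_rel_spec hp hr hpr ha).1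
    rw [hab, SPX_rel, if_neg hb] at h1
    exact absurd ((SPX_mem_iff hpr).2 h1) hb
  · have h1 := (SPX_rel_spec hp hr hpr hb).1
    rw [← hab, SPX_rel, if_neg ha] at h1
    exact absurd ((SPX_mem_iff hpr).2 h1) ha
  · rwa [SPX_rel, if_neg ha, SPX_rel, if_neg hb] at hab

theorem SPX_rel_map {p r : List α} (hp : p.Nodup) (hr : r.Nodup)
    (hpr : p.toFinset = r.toFinset) : p.map (SPX_rel p r) = r := by
  apply List.ext_getElem
  · rw [List.length_map]; exact SPX_len hp hr hpr
  · intro i h1 h2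
    rw [List.length_map] at h1
    rw [List.getElem_map]
    have hmem : p[i] ∈ p := List.getElem_mem _
    have h3 : p.idxOf p[i] < r.length := by
      rw [← SPX_len hp hr hpr]; exact List.idxOf_lt_length_iff.2 hmem
    rw [SPX_rel, if_pos hmem, List.getD_eq_getElem _ _ h3]
    congr 1
    exact List.Nodup.idxOf_getElem hp _ _

theorem SPX_map_mem_SPD {p r : List α} (hp : p.Nodup) (hr : r.Nodup)
    (hpr : p.toFinset = r.toFinset) {m : List α} (hm : m ∈ SPX_SPD p) :
    m.map (SPX_rel p r) ∈ SPX_SPD r := by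
  set f := SPX_rel p r with hf
  have hinj : Function.Injective f := SPX_rel_inj hp hr hpr
  have hmapp : p.map f = r := SPX_rel_map hp hr hpr
  obtain ⟨⟨hmnd, hmA⟩, hmb⟩ := hm
  have hidx : ∀ x ∈ p, r.idxOf (f x) = p.idxOf x :=
    fun x hx => (SPX_rel_spec hp hr hpr hx).2
  constructor
  · refine ⟨hmnd.map hinj, ?_⟩
    ext x
    simp only [List.mem_toFinset, List.mem_map]
    constructor
    · rintro ⟨y, hy, rfl⟩
      have : y ∈ p := by rw [← List.mem_toFinset, ← hmA, List.mem_toFinset]; exact hy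
      rw [← hmapp]
      exact List.mem_map.2 ⟨y, this, rfl⟩
    · intro hx
      rw [← hmapp] at hx
      obtain ⟨y, hy, rfl⟩ := List.mem_map.1 hx
      exact ⟨y, by rw [← List.mem_toFinset, hmA, List.mem_toFinset]; exact hy, rfl⟩
  · intro a' ha' b' hb' hne h' hh' hyp
    obtain ⟨a, ha, rfl⟩ := List.mem_map.1 (hmapp ▸ ha')
    obtain ⟨b, hb, rfl⟩ := List.mem_map.1 (hmapp ▸ hb')
    rw [List.head?_map] at hh'
    cases hhm : m.head? with
    | none => rw [hhm] at hh'; simp at hh'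
    | some h =>
      rw [hhm] at hh'
      simp only [Option.map_some] at hh'
      have hhmem : h ∈ m := List.mem_of_mem_head? (hhm ▸ rfl)
      have hhp : h ∈ p := by
        rw [← List.mem_toFinset, hmA, List.mem_toFinset] at hhmem; exact hhmem
      have hfh : f h = h' := Option.some_inj.1 hh'
      rw [← hfh, hidx a ha, hidx b hb, hidx h hhp] at hyp
      rw [SPX_indexOf_map hinj, SPX_indexOf_map hinj]
      exact hmb a ha b hb (fun he => hne (he ▸ rfl)) h hhm hyp

theorem SPX_SPD_finite (p : List α) : (SPX_SPD p).Finite :=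
  (SPX_prefOn_finite p.toFinset).subset (fun _ hl => hl.1)

theorem SPX_SPD_eq_of_subset {p r : List α} (hp : p.Nodup) (hr : r.Nodup)
    (hpr : p.toFinset = r.toFinset) (hsub : SPX_SPD p ⊆ SPX_SPD r) :
    SPX_SPD p = SPX_SPD r := by
  have h1 : (SPX_SPD r).ncard ≤ (SPX_SPD p).ncard := by
    calc (SPX_SPD r).ncard
        = ((List.map (SPX_rel r p)) '' SPX_SPD r).ncard :=
          (Set.ncard_image_of_injective _
            (List.map_injective_iff.2 (SPX_rel_inj hr hp hpr.symm))).symm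
      _ ≤ (SPX_SPD p).ncard := by
          apply Set.ncard_le_ncard _ (SPX_SPD_finite p)
          rintro _ ⟨m, hm, rfl⟩
          exact SPX_map_mem_SPD hr hp hpr.symm hm
  exact Set.eq_of_subset_of_ncard_le hsub h1 (SPX_SPD_finite r)

theorem SPX_isBSPD {p : List α} (hp : p.Nodup) : IsBSPD p.toFinset (SPX_SPD p) :=
  ⟨fun _ hl => hl.1, p, hp, rfl,
    fun l hl a ha b hb hne h hh hyp =>
      hl.2 a (List.mem_toFinset.1 ha) b (List.mem_toFinset.1 hb) hne h hh hyp⟩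

theorem SPX_isMaxBSPD {p : List α} (hp : p.Nodup) :
    IsMaximalBSPD p.toFinset (SPX_SPD p) := by
  refine ⟨SPX_isBSPD hp, ?_⟩
  intro l hl hnotin hBS
  obtain ⟨hsub, r, hr, hrA, hblack⟩ := hBS
  have hpr : p.toFinset = r.toFinset := hrA.symm
  have key : insert l (SPX_SPD p) ⊆ SPX_SPD r := by
    intro x hx
    refine ⟨by rw [hrA]; exact hsub hx, ?_⟩
    intro a ha b hb hne h hh hyp
    exact hblack x hx a (by rw [← hrA]; exact List.mem_toFinset.2 ha)
      b (by rw [← hrA]; exact List.mem_toFinset.2 hb) hne h hh hyp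
  have hsub2 : SPX_SPD p ⊆ SPX_SPD r := fun x hx => key (Set.mem_insert_of_mem _ hx)
  have heq := SPX_SPD_eq_of_subset hp hr hpr hsub2
  exact hnotin (heq ▸ key (Set.mem_insert _ _))

theorem SPX_head_exists {l : List α} {v : α} (hv : v ∈ l) : ∃ h, l.head? = some h := by
  cases l with
  | nil => cases hv
  | cons c t => exact ⟨c, rfl⟩

theorem SPX_mem_of_SPD {p l : List α} (hl : l ∈ SPX_SPD p) {x : α} :
    x ∈ l ↔ x ∈ p := by
  rw [← List.mem_toFinset, hl.1.2, List.mem_toFinset]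

/-- The middle alternative of a triple is never ranked last. -/
theorem SPX_middle_not_last {p : List α} (hp : p.Nodup) {u v w : α}
    (hu : u ∈ p) (hv : v ∈ p) (hw : w ∈ p)
    (huv : p.idxOf u < p.idxOf v) (hvw : p.idxOf v < p.idxOf w)
    {T : Finset α} (hu' : u ∈ T) (hv' : v ∈ T) (hw' : w ∈ T) :
    ∀ l ∈ SPX_SPD p, (restrictPref l T).getLast? ≠ some v := by
  intro l hl hlast
  have hul : u ∈ l := (SPX_mem_of_SPD hl).2 hu
  have hvl : v ∈ l := (SPX_mem_of_SPD hl).2 hv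
  have hwl : w ∈ l := (SPX_mem_of_SPD hl).2 hw
  have hum : u ∈ restrictPref l T := List.mem_filter.2 ⟨hul, by simpa using hu'⟩
  have hvm : v ∈ restrictPref l T := List.mem_filter.2 ⟨hvl, by simpa using hv'⟩
  have hwm : w ∈ restrictPref l T := List.mem_filter.2 ⟨hwl, by simpa using hw'⟩
  have hmnd : (restrictPref l T).Nodup := hl.1.1.filter _
  obtain ⟨h, hh⟩ := SPX_head_exists hvl
  have hvw' : v ≠ w := fun he => by rw [he] at hvw; exact lt_irrefl _ hvw
  have huv' : u ≠ v := fun he => by rw [he] at huv; exact lt_irrefl _ huv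
  rcases le_total (p.idxOf h) (p.idxOf v) with hc | hc
  · have h1 : l.idxOf v < l.idxOf w :=
      hl.2 v hv w hw hvw' h hh (Or.inl ⟨hc, le_of_lt hvw⟩)
    have h2 : (restrictPref l T).idxOf v < (restrictPref l T).idxOf w :=
      SPX_filter_idx l hl.1.1 v w hvm hwm h1
    have h3 := SPX_last_idx_max hmnd hlast hwm
    omega
  · have h1 : l.idxOf v < l.idxOf u :=
      hl.2 v hv u hu (Ne.symm huv') h hh (Or.inr ⟨le_of_lt huv, hc⟩)
    have h2 : (restrictPref l T).idxOf v < (restrictPref l T).idxOf u :=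
      SPX_filter_idx l hl.1.1 v u hvm hum h1
    have h3 := SPX_last_idx_max hmnd hlast hum
    omega

theorem SPX_SPD_isASPD {p : List α} (hp : p.Nodup) : IsASPD p.toFinset (SPX_SPD p) := by
  refine ⟨fun _ hl => hl.1, ?_⟩
  intro T hT h3
  obtain ⟨x, y, z, hxy, hxz, hyz, rfl⟩ := Finset.card_eq_three.1 h3
  have hx : x ∈ p := List.mem_toFinset.1 (hT (by simp))
  have hy : y ∈ p := List.mem_toFinset.1 (hT (by simp))
  have hz : z ∈ p := List.mem_toFinset.1 (hT (by simp))
  have hxT : x ∈ ({x, y, z} : Finset α) := by simp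
  have hyT : y ∈ ({x, y, z} : Finset α) := by simp
  have hzT : z ∈ ({x, y, z} : Finset α) := by simp
  have dxy : p.idxOf x ≠ p.idxOf y := fun he => hxy ((List.idxOf_inj hx).1 he)
  have dxz : p.idxOf x ≠ p.idxOf z := fun he => hxz ((List.idxOf_inj hx).1 he)
  have dyz : p.idxOf y ≠ p.idxOf z := fun he => hyz ((List.idxOf_inj hy).1 he)
  rcases lt_or_gt_of_ne dxy with h1 | h1 <;> rcases lt_or_gt_of_ne dxz with h2 | h2 <;>
    rcases lt_or_gt_of_ne dyz with h3' | h3'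
  · exact ⟨y, hyT, SPX_middle_not_last hp hx hy hz h1 h3' hxT hyT hzT⟩
  · exact ⟨z, hzT, SPX_middle_not_last hp hx hz hy h2 h3' hxT hzT hyT⟩
  · exact absurd (lt_trans h1 h3') (by omega)
  · exact ⟨x, hxT, SPX_middle_not_last hp hz hx hy h2 h1 hzT hxT hyT⟩
  · exact ⟨x, hxT, SPX_middle_not_last hp hy hx hz h1 h2 hyT hxT hzT⟩
  · exact absurd (lt_trans (lt_trans h3' h1) h2) (lt_irrefl _)
  · exact ⟨z, hzT, SPX_middle_not_last hp hy hz hx h3' h2 hyT hzT hxT⟩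
  · exact ⟨y, hyT, SPX_middle_not_last hp hz hy hx h3' h1 hzT hyT hxT⟩

theorem SPX_D_eq {A : Finset α} {D : Set (List α)} {p : List α}
    (hp : p.Nodup) (hpA : p.toFinset = A) (hmax : IsMaximalASPD A D)
    (hDsub : D ⊆ PrefOn A) (hDblack : ∀ l ∈ D, SPX_Black p l) :
    D = SPX_SPD p := by
  have hsub : D ⊆ SPX_SPD p := fun l hl => ⟨by rw [hpA]; exact hDsub hl, hDblack l hl⟩
  apply Set.Subset.antisymm hsub
  intro l hl
  by_contra hnot
  apply hmax.2 l (by rw [← hpA]; exact hl.1) hnot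
  constructor
  · intro x hx
    rcases hx with rfl | hx
    · rw [← hpA]; exact hl.1
    · exact hDsub hx
  · intro T hT h3
    obtain ⟨x, hx, hxP⟩ := (SPX_SPD_isASPD hp).2 T (by rw [hpA]; exact hT) h3
    refine ⟨x, hx, fun m hm => ?_⟩
    rcases hm with rfl | hm
    · exact hxP m hl
    · exact hxP m (hsub hm)

theorem SPX_endpoint {p : List α} (hp : p.Nodup) {l : List α} (hl : l ∈ SPX_SPD p)
    {y : α} (hy : l.getLast? = some y) :
    p.idxOf y = 0 ∨ p.idxOf y = p.length - 1 := by
  by_contra hnot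
  push_neg at hnot
  have hyl : y ∈ l := List.mem_of_mem_getLast? (hy ▸ rfl)
  have hyp' : y ∈ p := (SPX_mem_of_SPD hl).1 hyl
  have hylt : p.idxOf y < p.length := List.idxOf_lt_length_iff.2 hyp'
  have h0 : 0 < p.idxOf y := Nat.pos_of_ne_zero hnot.1
  have h1 : p.idxOf y + 1 < p.length := by omega
  have h2 : p.idxOf y - 1 < p.length := by omega
  set x := p[p.idxOf y - 1]
  set z := p[p.idxOf y + 1]
  have hxp : x ∈ p := List.getElem_mem _
  have hzp : z ∈ p := List.getElem_mem _
  have hix : p.idxOf x = p.idxOf y - 1 := List.Nodup.idxOf_getElem hp _ _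
  have hiz : p.idxOf z = p.idxOf y + 1 := List.Nodup.idxOf_getElem hp _ _
  have hxy : x ≠ y := fun he => by rw [he] at hix; omega
  have hzy : z ≠ y := fun he => by rw [he] at hiz; omega
  have hxl : x ∈ l := (SPX_mem_of_SPD hl).2 hxp
  have hzl : z ∈ l := (SPX_mem_of_SPD hl).2 hzp
  obtain ⟨h, hh⟩ := SPX_head_exists hyl
  rcases le_total (p.idxOf h) (p.idxOf y) with hc | hc
  · have hlt : l.idxOf y < l.idxOf z :=
      hl.2 y hyp' z hzp (Ne.symm hzy) h hh (Or.inl ⟨hc, by omega⟩)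
    have := SPX_last_idx_max hl.1.1 hy hzl
    omega
  · have hlt : l.idxOf y < l.idxOf x :=
      hl.2 y hyp' x hxp (Ne.symm hxy) h hh (Or.inr ⟨by omega, hc⟩)
    have := SPX_last_idx_max hl.1.1 hy hxl
    omega

theorem SPX_idx_rev {p : List α} (hp : p.Nodup) {x : α} (hx : x ∈ p) :
    p.reverse.idxOf x + p.idxOf x + 1 = p.length := by
  have h1 : p.idxOf x < p.length := List.idxOf_lt_length_iff.2 hx
  have h2 : p.length - 1 - p.idxOf x < p.reverse.length := by
    rw [List.length_reverse]; omega
  have h3 : p.reverse[p.length - 1 - p.idxOf x] = x := by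
    rw [List.getElem_reverse]
    have : p.length - 1 - (p.length - 1 - p.idxOf x) = p.idxOf x := by omega
    simp only [this]
    simpa [List.get_eq_getElem] using List.idxOf_get (l := p) (a := x) (by simpa using h1)
  have h4 : p.reverse.idxOf x = p.length - 1 - p.idxOf x := by
    conv_lhs => rw [← h3]
    exact List.Nodup.idxOf_getElem (List.nodup_reverse.2 hp) _ _
  omega

theorem SPX_black_reverse {p l : List α} (hp : p.Nodup)
    (hmem : ∀ x, x ∈ l → x ∈ p) (hb : SPX_Black p l) : SPX_Black p.reverse l := by
  intro a ha b hbm hne h hh hyp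
  rw [List.mem_reverse] at ha hbm
  have hhl : h ∈ l := List.mem_of_mem_head? (hh ▸ rfl)
  have hhp : h ∈ p := hmem h hhl
  have ea := SPX_idx_rev hp ha
  have eb := SPX_idx_rev hp hbm
  have eh := SPX_idx_rev hp hhp
  apply hb a ha b hbm hne h hh
  omega

theorem SPX_SPD_reverse {p : List α} (hp : p.Nodup) : SPX_SPD p.reverse = SPX_SPD p := by
  have key : ∀ q : List α, q.Nodup → SPX_SPD q ⊆ SPX_SPD q.reverse := by
    intro q hq l hl
    refine ⟨⟨hl.1.1, by rw [List.toFinset_reverse]; exact hl.1.2⟩, ?_⟩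
    exact SPX_black_reverse hq (fun x hx => (SPX_mem_of_SPD hl).1 hx) hl.2
  apply Set.Subset.antisymm
  · intro l hl
    have := key p.reverse (List.nodup_reverse.2 hp) hl
    rwa [List.reverse_reverse] at this
  · exact key p hp

theorem SPX_last_idx {l : List α} (hnd : l.Nodup) {y : α}
    (hy : l.getLast? = some y) : l.idxOf y = l.length - 1 := by
  have hdec : l.dropLast ++ [y] = l := List.dropLast_append_getLast? y hy
  have hyn : y ∉ l.dropLast := by
    intro hmem
    have h2 := hdec ▸ hnd
    rw [List.nodup_append] at h2
    exact h2.2.2 _ hmem _ (by simp) rfl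
  have h1 : l.idxOf y = l.dropLast.length := by
    conv_lhs => rw [← hdec]
    rw [List.idxOf_append_of_notMem hyn]; simp
  have h3 : l.length = l.dropLast.length + 1 := by
    conv_lhs => rw [← hdec]
    simp
  omega

theorem SPX_head_idx {l : List α} {h : α} (hh : l.head? = some h) :
    l.idxOf h = 0 ∧ h ∈ l := by
  cases l with
  | nil => simp at hh
  | cons c t =>
    have : c = h := by simpa using hh
    subst this
    exact ⟨List.idxOf_cons_eq _ rfl, List.mem_cons_self⟩

theorem SPX_split_one {q : List α} {a₁ : α} (hnd : (q ++ [a₁]).Nodup)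
    {A : Finset α} (hA : (q ++ [a₁]).toFinset = A) (hcard : 3 ≤ A.card)
    {D : Set (List α)} (hD : D = SPX_SPD (q ++ [a₁])) :
    bottomRestrict A D a₁ = SPX_SPD q := by
  set P := q ++ [a₁] with hP
  have hqnd : q.Nodup := (List.nodup_append.1 hnd).1
  have ha₁q : a₁ ∉ q := fun hmem => (List.nodup_append.1 hnd).2.2 _ hmem _ (by simp) rfl
  have hlenP : P.length = A.card := by rw [← hA, List.toFinset_card_of_nodup hnd]
  have hqlen : q.length = A.card - 1 := by
    have : P.length = q.length + 1 := by simp [hP]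
    omega
  have ha₁A : a₁ ∈ A := by rw [← hA]; simp [hP]
  have hqA : q.toFinset = A.erase a₁ := by
    ext x
    rw [Finset.mem_erase, ← hA]
    simp only [hP, List.toFinset_append, Finset.mem_union, List.mem_toFinset,
      List.toFinset_cons, List.toFinset_nil, LawfulSingleton.insert_empty_eq, Finset.mem_singleton,
      List.mem_singleton]
    constructor
    · intro hx
      exact ⟨fun he => ha₁q (he ▸ hx), Or.inl hx⟩
    · rintro ⟨hne, hx | rfl⟩
      · exact hx
      · exact absurd rfl hne
  have idxP : ∀ x ∈ q, P.idxOf x = q.idxOf x := fun x hx =>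
    List.idxOf_append_of_mem hx
  have idxa₁ : P.idxOf a₁ = q.length := by
    rw [hP, List.idxOf_append_of_notMem ha₁q]; simp
  apply Set.Subset.antisymm
  · -- bottomRestrict ⊆ SPD q
    rintro m ⟨l, hlD, hlast, rfl⟩
    rw [hD] at hlD
    obtain ⟨⟨hlnd, hlA⟩, hlb⟩ := hlD
    have hmeml : ∀ x, x ∈ l ↔ x ∈ P := fun x => by
      rw [← List.mem_toFinset, hlA, List.mem_toFinset]
    have hllen : l.length = A.card := by
      rw [← List.toFinset_card_of_nodup hlnd, hlA, hA]
    obtain ⟨h, hh⟩ : ∃ h, l.head? = some h := by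
      cases l with
      | nil => simp at hllen; omega
      | cons c t => exact ⟨c, rfl⟩
    have hidxh := SPX_head_idx hh
    have hidxa₁ : l.idxOf a₁ = l.length - 1 := SPX_last_idx hlnd hlast
    have hha₁ : h ≠ a₁ := fun he => by
      rw [he] at hidxh; omega
    have hhA : h ∈ A := by
      rw [← hA, ← hlA]
      exact List.mem_toFinset.2 hidxh.2
    have hhq : h ∈ q := by
      have := (hmeml h).1 hidxh.2
      rcases List.mem_append.1 this with h' | h'
      · exact h'
      · simp at h'; exact absurd h' hha₁
    have hmhead : (restrictPref l (A.erase a₁)).head? = some h := by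
      cases l with
      | nil => simp at hh
      | cons c t =>
        have hch : c = h := by simpa using hh
        subst hch
        rw [restrictPref, List.filter_cons_of_pos (by simp [Finset.mem_erase, hha₁, hhA])]
        rfl
    have hmem_m : ∀ x ∈ q, x ∈ restrictPref l (A.erase a₁) := by
      intro x hx
      refine List.mem_filter.2 ⟨(hmeml x).2 (by simp [hP, hx]), ?_⟩
      simp only [decide_eq_true_eq]
      rw [← hqA, List.mem_toFinset]; exact hx
    refine ⟨⟨hlnd.filter _, ?_⟩, ?_⟩
    · rw [restrictPref, List.toFinset_filter, hlA, hA, hqA]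
      ext x
      simp only [Finset.mem_filter, Finset.mem_erase, decide_eq_true_eq]
      tauto
    · intro a ha b hb hne h' hh' hyp
      rw [hmhead] at hh'
      obtain rfl := Option.some_inj.1 hh'
      have haP : a ∈ P := by simp [hP, ha]
      have hbP : b ∈ P := by simp [hP, hb]
      rw [← idxP a ha, ← idxP b hb, ← idxP h hhq] at hyp
      have hlt : l.idxOf a < l.idxOf b := hlb a haP b hbP hne h hh hyp
      exact SPX_filter_idx l hlnd a b (hmem_m a ha) (hmem_m b hb) hlt
  · -- SPD q ⊆ bottomRestrict
    intro m hm
    obtain ⟨⟨hmnd, hmq⟩, hmb⟩ := hm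
    have hma₁ : a₁ ∉ m := fun hmem => ha₁q (by
      rwa [← List.mem_toFinset, hmq, List.mem_toFinset] at hmem)
    have hmlen : m.length = q.length := by
      rw [← List.toFinset_card_of_nodup hmnd, hmq, List.toFinset_card_of_nodup hqnd]
    have hmne : m ≠ [] := by
      intro he
      rw [he] at hmlen; simp at hmlen
      omega
    set l := m ++ [a₁] with hl
    have hlnd : l.Nodup := by
      rw [hl, List.nodup_append]
      refine ⟨hmnd, List.nodup_singleton _, fun x hx y hx' hxy => ?_⟩
      have : x = a₁ := by simpa [← hxy] using hx'
      exact hma₁ (this ▸ hx)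
    have hlP : l.toFinset = P.toFinset := by
      rw [hl, hP, List.toFinset_append, List.toFinset_append, hmq]
    have hmeml : ∀ x, x ∈ l ↔ x ∈ P := fun x => by
      rw [← List.mem_toFinset, hlP, List.mem_toFinset]
    have hrest : restrictPref l (A.erase a₁) = m := by
      rw [restrictPref, hl, List.filter_append]
      have h1 : m.filter (fun a => decide (a ∈ A.erase a₁)) = m := by
        rw [List.filter_eq_self]
        intro x hx
        simp only [decide_eq_true_eq]
        rw [← hqA, List.mem_toFinset]
        rwa [← List.mem_toFinset, hmq, List.mem_toFinset] at hx
      have h2 : [a₁].filter (fun a => decide (a ∈ A.erase a₁)) = [] := by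
        simp [Finset.mem_erase]
      rw [h1, h2, List.append_nil]
    obtain ⟨h, hh⟩ : ∃ h, m.head? = some h := by
      cases m with
      | nil => exact absurd rfl hmne
      | cons c t => exact ⟨c, rfl⟩
    have hlh : l.head? = some h := by
      cases m with
      | nil => exact absurd rfl hmne
      | cons c t => rw [hl]; simpa using hh
    have hhq : h ∈ q := by
      have := (SPX_head_idx hh).2
      rwa [← List.mem_toFinset, hmq, List.mem_toFinset] at this
    refine ⟨l, ?_, List.getLast?_concat, hrest.symm⟩
    rw [hD]
    refine ⟨⟨hlnd, by rw [hlP]⟩, ?_⟩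
    intro a ha b hb hne h' hh' hyp
    rw [hlh] at hh'
    obtain rfl := Option.some_inj.1 hh'
    have hidxh : P.idxOf h = q.idxOf h := idxP h hhq
    have hhlt : q.idxOf h < q.length := List.idxOf_lt_length_iff.2 hhq
    by_cases hb1 : b = a₁
    · have ha1 : a ≠ a₁ := fun he => hne (he.trans hb1.symm)
      have haq : a ∈ q := by
        rcases List.mem_append.1 ha with h'' | h''
        · exact h''
        · simp at h''; exact absurd h'' ha1
      have ham : a ∈ m := by rw [← List.mem_toFinset, hmq, List.mem_toFinset]; exact haq
      rw [hb1, hl, List.idxOf_append_of_mem ham, List.idxOf_append_of_notMem hma₁]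
      have := List.idxOf_lt_length_iff.2 ham
      simp only [List.idxOf_cons_eq _ rfl]
      omega
    · by_cases ha1 : a = a₁
      · exfalso
        rw [ha1] at hyp hne
        have hbq : b ∈ q := by
          rcases List.mem_append.1 hb with h' | h'
          · exact h'
          · simp at h'; exact absurd h' (Ne.symm hne)
        have hblt : q.idxOf b < q.length := List.idxOf_lt_length_iff.2 hbq
        rw [idxa₁, idxP b hbq, hidxh] at hyp
        omega
      · have haq : a ∈ q := by
          rcases List.mem_append.1 ha with h' | h'
          · exact h'
          · simp at h'; exact absurd h' ha1
        have hbq : b ∈ q := by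
          rcases List.mem_append.1 hb with h' | h'
          · exact h'
          · simp at h'; exact absurd h' hb1
        have ham : a ∈ m := by rw [← List.mem_toFinset, hmq, List.mem_toFinset]; exact haq
        have hbm : b ∈ m := by rw [← List.mem_toFinset, hmq, List.mem_toFinset]; exact hbq
        rw [idxP a haq, idxP b hbq, hidxh] at hyp
        rw [hl, List.idxOf_append_of_mem ham, List.idxOf_append_of_mem hbm]
        exact hmb a haq b hbq hne h hh hyp

theorem SPX_split_two {q : List α} {a₁ a₂ : α} (hnd : (a₂ :: (q ++ [a₁])).Nodup)
    {A : Finset α} (hA : (a₂ :: (q ++ [a₁])).toFinset = A) (hcard : 3 ≤ A.card)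
    {D : Set (List α)} (hD : D = SPX_SPD (a₂ :: (q ++ [a₁]))) :
    bottom2Restrict A D a₁ a₂ = SPX_SPD q := by
  set P := a₂ :: (q ++ [a₁]) with hP
  have hnd' : (q ++ [a₁]).Nodup := hnd.of_cons
  have hqnd : q.Nodup := (List.nodup_append.1 hnd').1
  have ha₁q : a₁ ∉ q := fun hmem => (List.nodup_append.1 hnd').2.2 _ hmem _ (by simp) rfl
  have ha₂qa : a₂ ∉ q ++ [a₁] := (List.nodup_cons.1 hnd).1
  have ha₂q : a₂ ∉ q := fun hmem => ha₂qa (List.mem_append.2 (Or.inl hmem))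
  have ha₁₂ : a₁ ≠ a₂ := fun he => ha₂qa (by rw [← he]; simp)
  have hlenP : P.length = A.card := by rw [← hA, List.toFinset_card_of_nodup hnd]
  have hPlen : P.length = q.length + 2 := by simp [hP]
  have hqlen : q.length = A.card - 2 := by omega
  have ha₁A : a₁ ∈ A := by rw [← hA]; simp [hP]
  have ha₂A : a₂ ∈ A := by rw [← hA]; simp [hP]
  have hmemP : ∀ x, x ∈ P ↔ (x = a₂ ∨ x ∈ q ∨ x = a₁) := by
    intro x; simp [hP]
  have hqA : q.toFinset = A \ {a₁, a₂} := by
    ext x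
    rw [Finset.mem_sdiff, ← hA]
    simp only [List.mem_toFinset, hmemP, Finset.mem_insert, Finset.mem_singleton]
    constructor
    · intro hx
      exact ⟨Or.inr (Or.inl hx), fun hc => by
        rcases hc with rfl | rfl
        · exact ha₁q hx
        · exact ha₂q hx⟩
    · rintro ⟨hx, hnx⟩
      rcases hx with rfl | hx | rfl
      · exact absurd (Or.inr rfl) hnx
      · exact hx
      · exact absurd (Or.inl rfl) hnx
  have idxa₂ : P.idxOf a₂ = 0 := List.idxOf_cons_eq _ rfl
  have idxq : ∀ x ∈ q, P.idxOf x = q.idxOf x + 1 := by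
    intro x hx
    rw [hP, List.idxOf_cons_ne _ (fun he => ha₂q (by rw [he]; exact hx)),
      List.idxOf_append_of_mem hx]
  have idxa₁ : P.idxOf a₁ = q.length + 1 := by
    rw [hP, List.idxOf_cons_ne _ (Ne.symm ha₁₂), List.idxOf_append_of_notMem ha₁q]
    simp
  apply Set.Subset.antisymm
  · -- bottom2Restrict ⊆ SPD q
    rintro m ⟨l, hlD, hlast, hget, rfl⟩
    rw [hD] at hlD
    obtain ⟨⟨hlnd, hlA⟩, hlb⟩ := hlD
    have hmeml : ∀ x, x ∈ l ↔ x ∈ P := fun x => by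
      rw [← List.mem_toFinset, hlA, List.mem_toFinset]
    have hllen : l.length = A.card := by
      rw [← List.toFinset_card_of_nodup hlnd, hlA, hA]
    obtain ⟨h, hh⟩ : ∃ h, l.head? = some h := by
      cases l with
      | nil => simp at hllen; omega
      | cons c t => exact ⟨c, rfl⟩
    have hidxh := SPX_head_idx hh
    have hidxa₁ : l.idxOf a₁ = l.length - 1 := SPX_last_idx hlnd hlast
    obtain ⟨hlt2, hgeq⟩ := List.getElem?_eq_some_iff.1 hget
    have hidxa₂ : l.idxOf a₂ = A.card - 2 := by
      have h9 := List.Nodup.idxOf_getElem hlnd (A.card - 2) (by omega)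
      rw [hgeq] at h9
      exact h9
    have hha₁ : h ≠ a₁ := fun he => by rw [he] at hidxh; omega
    have hha₂ : h ≠ a₂ := fun he => by
      rw [he] at hidxh
      have := hidxh.1
      rw [hidxa₂] at this
      omega
    have hhq : h ∈ q := by
      rcases (hmemP h).1 ((hmeml h).1 hidxh.2) with rfl | hx | rfl
      · exact absurd rfl hha₂
      · exact hx
      · exact absurd rfl hha₁
    have hhA : h ∈ A := by
      rw [← hA]
      exact List.mem_toFinset.2 ((hmeml h).1 hidxh.2)
    have hmhead : (restrictPref l (A \ {a₁, a₂})).head? = some h := by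
      cases l with
      | nil => simp at hh
      | cons c t =>
        have hch : c = h := by simpa using hh
        subst hch
        rw [restrictPref, List.filter_cons_of_pos
          (by simp [Finset.mem_sdiff, hha₁, hha₂, hhA])]
        rfl
    have hmem_m : ∀ x ∈ q, x ∈ restrictPref l (A \ {a₁, a₂}) := by
      intro x hx
      refine List.mem_filter.2 ⟨(hmeml x).2 ((hmemP x).2 (Or.inr (Or.inl hx))), ?_⟩
      simp only [decide_eq_true_eq]
      rw [← hqA, List.mem_toFinset]; exact hx
    refine ⟨⟨hlnd.filter _, ?_⟩, ?_⟩
    · rw [restrictPref, List.toFinset_filter, hlA, hA, hqA]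
      ext x
      simp only [Finset.mem_filter, Finset.mem_sdiff, decide_eq_true_eq]
      tauto
    · intro a ha b hb hne h' hh' hyp
      rw [hmhead] at hh'
      obtain rfl := Option.some_inj.1 hh'
      have haP : a ∈ P := (hmemP a).2 (Or.inr (Or.inl ha))
      have hbP : b ∈ P := (hmemP b).2 (Or.inr (Or.inl hb))
      have e1 := idxq a ha
      have e2 := idxq b hb
      have e3 := idxq h hhq
      have hyp' : (P.idxOf h ≤ P.idxOf a ∧ P.idxOf a ≤ P.idxOf b) ∨
          (P.idxOf b ≤ P.idxOf a ∧ P.idxOf a ≤ P.idxOf h) := by omega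
      have hlt : l.idxOf a < l.idxOf b := hlb a haP b hbP hne h hh hyp'
      exact SPX_filter_idx l hlnd a b (hmem_m a ha) (hmem_m b hb) hlt
  · -- SPD q ⊆ bottom2Restrict
    intro m hm
    obtain ⟨⟨hmnd, hmq⟩, hmb⟩ := hm
    have hmemm : ∀ x, x ∈ m ↔ x ∈ q := fun x => by
      rw [← List.mem_toFinset, hmq, List.mem_toFinset]
    have hma₁ : a₁ ∉ m := fun hmem => ha₁q ((hmemm a₁).1 hmem)
    have hma₂ : a₂ ∉ m := fun hmem => ha₂q ((hmemm a₂).1 hmem)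
    have hmlen : m.length = q.length := by
      rw [← List.toFinset_card_of_nodup hmnd, hmq, List.toFinset_card_of_nodup hqnd]
    have hmne : m ≠ [] := by
      intro he
      rw [he] at hmlen; simp at hmlen
      omega
    set l := m ++ [a₂, a₁] with hl
    have hlnd : l.Nodup := by
      rw [hl, List.nodup_append]
      refine ⟨hmnd, by simp [ha₁₂.symm], fun x hx y hx' hxy => ?_⟩
      rcases (by simpa [← hxy] using hx' : x = a₂ ∨ x = a₁) with rfl | rfl
      · exact hma₂ hx
      · exact hma₁ hx
    have hmeml : ∀ x, x ∈ l ↔ x ∈ P := by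
      intro x
      rw [hl, hmemP, List.mem_append, hmemm]
      simp only [List.mem_cons, List.mem_singleton, List.not_mem_nil, or_false]
      tauto
    have hlP : l.toFinset = P.toFinset := by
      ext x
      rw [List.mem_toFinset, List.mem_toFinset]
      exact hmeml x
    have hlast : l.getLast? = some a₁ := by
      have h9 : m ++ [a₂, a₁] = (m ++ [a₂]) ++ [a₁] := by simp
      rw [hl, h9]
      exact List.getLast?_concat
    have hget : l[A.card - 2]? = some a₂ := by
      rw [hl, List.getElem?_append_right (by omega),
        show A.card - 2 - m.length = 0 by omega]
      rfl
    have hrest : restrictPref l (A \ {a₁, a₂}) = m := by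
      rw [restrictPref, hl, List.filter_append]
      have h1 : m.filter (fun a => decide (a ∈ A \ {a₁, a₂})) = m := by
        rw [List.filter_eq_self]
        intro x hx
        simp only [decide_eq_true_eq]
        rw [← hqA, List.mem_toFinset]
        exact (hmemm x).1 hx
      have h2 : [a₂, a₁].filter (fun a => decide (a ∈ A \ {a₁, a₂})) = [] := by
        simp [Finset.mem_sdiff]
      rw [h1, h2, List.append_nil]
    obtain ⟨h, hh⟩ : ∃ h, m.head? = some h := by
      cases m with
      | nil => exact absurd rfl hmne
      | cons c t => exact ⟨c, rfl⟩
    have hlh : l.head? = some h := by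
      cases m with
      | nil => exact absurd rfl hmne
      | cons c t => rw [hl]; simpa using hh
    have hhq : h ∈ q := (hmemm h).1 (SPX_head_idx hh).2
    have hhlt : q.idxOf h < q.length := List.idxOf_lt_length_iff.2 hhq
    have idxla₂ : l.idxOf a₂ = m.length := by
      rw [hl, List.idxOf_append_of_notMem hma₂]
      simp
    have idxla₁ : l.idxOf a₁ = m.length + 1 := by
      rw [hl, List.idxOf_append_of_notMem hma₁,
        List.idxOf_cons_ne _ ha₁₂.symm]
      simp [List.idxOf_cons_eq _ rfl]
    refine ⟨l, ?_, hlast, hget, hrest.symm⟩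
    rw [hD]
    refine ⟨⟨hlnd, by rw [hlP]⟩, ?_⟩
    intro a ha b hb hne h' hh' hyp
    rw [hlh] at hh'
    obtain rfl := Option.some_inj.1 hh'
    have e3 := idxq h hhq
    rcases (hmemP a).1 ha with ha2 | haq | ha1
    · -- a = a₂ : impossible
      exfalso
      rw [ha2, idxa₂] at hyp
      rcases hyp with ⟨hy1, _⟩ | ⟨hy1, _⟩
      · omega
      · have hb0 : P.idxOf b = 0 := by omega
        have : b = a₂ := (List.idxOf_inj hb).1
          (by rw [hb0, idxa₂])
        rw [ha2] at hne
        exact hne this.symm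
    · rcases (hmemP b).1 hb with hb2 | hbq | hb1
      · -- b = a₂ : goal is just idx a < m.length
        have ham : a ∈ m := (hmemm a).2 haq
        rw [hb2, idxla₂, hl, List.idxOf_append_of_mem ham]
        exact List.idxOf_lt_length_iff.2 ham
      · have ham : a ∈ m := (hmemm a).2 haq
        have hbm : b ∈ m := (hmemm b).2 hbq
        have e1 := idxq a haq
        have e2 := idxq b hbq
        have hyp' : (q.idxOf h ≤ q.idxOf a ∧ q.idxOf a ≤ q.idxOf b) ∨
            (q.idxOf b ≤ q.idxOf a ∧ q.idxOf a ≤ q.idxOf h) := by omega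
        rw [hl, List.idxOf_append_of_mem ham, List.idxOf_append_of_mem hbm]
        exact hmb a haq b hbq hne h hh hyp'
      · -- b = a₁
        have ham : a ∈ m := (hmemm a).2 haq
        have := List.idxOf_lt_length_iff.2 ham
        rw [hb1, idxla₁, hl, List.idxOf_append_of_mem ham]
        omega
    · -- a = a₁ : impossible
      exfalso
      rw [ha1, idxa₁] at hyp
      have hbP : b ∈ P := hb
      have hblt : P.idxOf b < P.length := List.idxOf_lt_length_iff.2 hbP
      rcases hyp with ⟨_, hy2⟩ | ⟨hy1, hy2⟩
      · have hbeq : P.idxOf b = q.length + 1 := by omega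
        have : b = a₁ := (List.idxOf_inj hb).1
          (by rw [hbeq, idxa₁])
        rw [ha1] at hne
        exact hne this.symm
      · omega

theorem SPX_decomp {p : List α} (hp : p.Nodup) (hlen : 3 ≤ p.length) {b₁ b₂ : α}
    (h1 : p.idxOf b₁ = p.length - 1) (h2 : p.idxOf b₂ = 0) :
    ∃ q : List α, p = b₂ :: (q ++ [b₁]) := by
  cases p with
  | nil => simp at hlen
  | cons c t =>
    have hc : c = b₂ := by
      by_contra hne
      rw [List.idxOf_cons_ne _ hne] at h2
      simp at h2
    obtain rfl := hc.symm
    simp only [List.length_cons] at h1 hlen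
    have htlen : 2 ≤ t.length := by omega
    have hne : b₂ ≠ b₁ := by
      intro he
      rw [List.idxOf_cons_eq _ he] at h1
      omega
    have h1' : t.idxOf b₁ = t.length - 1 := by
      rw [List.idxOf_cons_ne _ hne] at h1
      omega
    have htne : t ≠ [] := by intro he; rw [he] at htlen; simp at htlen
    have hb₁t : b₁ ∈ t := by
      rw [← List.idxOf_lt_length_iff]
      omega
    have hlast : t.getLast htne = b₁ := by
      have e1 : t.getLast htne = t[t.length - 1] := List.getLast_eq_getElem htne
      have e2 := List.Nodup.idxOf_getElem hp.of_cons (t.length - 1) (by omega)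
      apply (List.idxOf_inj (List.getLast_mem htne)).1
      rw [e1, e2, h1']
    refine ⟨t.dropLast, ?_⟩
    conv_lhs => rw [← List.dropLast_append_getLast htne, hlast]

theorem SPX_toFinset_erase {q : List α} {a₁ : α} (hnd : (q ++ [a₁]).Nodup)
    {A : Finset α} (hA : (q ++ [a₁]).toFinset = A) : q.toFinset = A.erase a₁ := by
  have ha₁q : a₁ ∉ q := fun hmem => (List.nodup_append.1 hnd).2.2 _ hmem _ (by simp) rfl
  ext x
  rw [Finset.mem_erase, ← hA]
  simp only [List.toFinset_append, Finset.mem_union, List.mem_toFinset,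
    List.toFinset_cons, List.toFinset_nil, LawfulSingleton.insert_empty_eq, Finset.mem_singleton]
  constructor
  · intro hx
    exact ⟨fun he => ha₁q (he ▸ hx), Or.inl hx⟩
  · rintro ⟨hne, hx | rfl⟩
    · exact hx
    · exact absurd rfl hne

theorem SPX_toFinset_sdiff {q : List α} {a₁ a₂ : α} (hnd : (a₂ :: (q ++ [a₁])).Nodup)
    {A : Finset α} (hA : (a₂ :: (q ++ [a₁])).toFinset = A) :
    q.toFinset = A \ {a₁, a₂} := by
  have hnd' : (q ++ [a₁]).Nodup := hnd.of_cons
  have ha₁q : a₁ ∉ q := fun hmem => (List.nodup_append.1 hnd').2.2 _ hmem _ (by simp) rfl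
  have ha₂qa : a₂ ∉ q ++ [a₁] := (List.nodup_cons.1 hnd).1
  have ha₂q : a₂ ∉ q := fun hmem => ha₂qa (List.mem_append.2 (Or.inl hmem))
  ext x
  rw [Finset.mem_sdiff, ← hA]
  simp only [List.toFinset_cons, List.toFinset_append, Finset.mem_insert,
    Finset.mem_union, List.mem_toFinset, List.toFinset_cons, List.toFinset_nil,
    LawfulSingleton.insert_empty_eq, Finset.mem_singleton]
  constructor
  · intro hx
    refine ⟨Or.inr (Or.inl hx), ?_⟩
    intro hc
    rcases hc with rfl | rfl
    · exact ha₁q hx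
    · exact ha₂q hx
  · rintro ⟨hx, hnx⟩
    rcases hx with rfl | hx | rfl
    · exact absurd (Or.inr rfl) hnx
    · exact hx
    · exact absurd (Or.inl rfl) hnx

/-- Splitting a maximal Black's single-peaked domain: the domains `D₁`, `D₂`,
and `D'` obtained by splitting at the two bottom alternatives are again
(maximal) Black's single-peaked domains. -/
theorem maximal_bspd_splitting (A : Finset α) (D : Set (List α))
    (hD : IsMaximalASPD A D) (hB : IsBSPD A D) (hA : 3 ≤ A.card)
    (a₁ a₂ : α) (hne : a₁ ≠ a₂)
    (hb₁ : ∃ l ∈ D, l.getLast? = some a₁) (hb₂ : ∃ l ∈ D, l.getLast? = some a₂) :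
    IsBSPD (A.erase a₁) (bottomRestrict A D a₁) ∧
    IsBSPD (A.erase a₂) (bottomRestrict A D a₂) ∧
    IsBSPD (A \ {a₁, a₂}) (bottom2Restrict A D a₁ a₂) ∧
    IsMaximalBSPD (A.erase a₁) (bottomRestrict A D a₁) ∧
    IsMaximalBSPD (A.erase a₂) (bottomRestrict A D a₂) ∧
    IsMaximalBSPD (A \ {a₁, a₂}) (bottom2Restrict A D a₁ a₂) := by
  obtain ⟨hDsub, p, hpnd, hpA, hpblack⟩ := hB
  have hDblack : ∀ l ∈ D, SPX_Black p l := by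
    intro l hl a ha b hb hne' h hh hyp
    exact hpblack l hl a (by rw [← hpA]; exact List.mem_toFinset.2 ha)
      b (by rw [← hpA]; exact List.mem_toFinset.2 hb) hne' h hh hyp
  have hDeq : D = SPX_SPD p := SPX_D_eq hpnd hpA hD hDsub hDblack
  obtain ⟨l₁, hl₁D, hl₁last⟩ := hb₁
  obtain ⟨l₂, hl₂D, hl₂last⟩ := hb₂
  have hl₁SPD : l₁ ∈ SPX_SPD p := hDeq ▸ hl₁D
  have hl₂SPD : l₂ ∈ SPX_SPD p := hDeq ▸ hl₂D
  have ha₁p : a₁ ∈ p := (SPX_mem_of_SPD hl₁SPD).1 (List.mem_of_mem_getLast? (hl₁last ▸ rfl))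
  have ha₂p : a₂ ∈ p := (SPX_mem_of_SPD hl₂SPD).1 (List.mem_of_mem_getLast? (hl₂last ▸ rfl))
  have hplen : p.length = A.card := by rw [← hpA, List.toFinset_card_of_nodup hpnd]
  have e₁ := SPX_endpoint hpnd hl₁SPD hl₁last
  have e₂ := SPX_endpoint hpnd hl₂SPD hl₂last
  suffices H : ∀ p' : List α, p'.Nodup → p'.toFinset = A → D = SPX_SPD p' →
      p'.idxOf a₁ = p'.length - 1 → p'.idxOf a₂ = 0 →
      (IsBSPD (A.erase a₁) (bottomRestrict A D a₁) ∧
       IsBSPD (A.erase a₂) (bottomRestrict A D a₂) ∧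
       IsBSPD (A \ {a₁, a₂}) (bottom2Restrict A D a₁ a₂) ∧
       IsMaximalBSPD (A.erase a₁) (bottomRestrict A D a₁) ∧
       IsMaximalBSPD (A.erase a₂) (bottomRestrict A D a₂) ∧
       IsMaximalBSPD (A \ {a₁, a₂}) (bottom2Restrict A D a₁ a₂)) by
    rcases e₁ with e₁ | e₁ <;> rcases e₂ with e₂ | e₂
    · exact absurd ((List.idxOf_inj ha₁p).1 (e₁.trans e₂.symm)) hne
    · -- a₁ at 0, a₂ at end : use reverse
      have hr₁ := SPX_idx_rev hpnd ha₁p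
      have hr₂ := SPX_idx_rev hpnd ha₂p
      refine H p.reverse (List.nodup_reverse.2 hpnd)
        (by rw [List.toFinset_reverse]; exact hpA)
        (hDeq.trans (SPX_SPD_reverse hpnd).symm) ?_ ?_
      · rw [List.length_reverse]; omega
      · omega
    · exact H p hpnd hpA hDeq e₁ e₂
    · exact absurd ((List.idxOf_inj ha₁p).1 (e₁.trans e₂.symm)) hne
  intro P hPnd hPA hDeqP hidx1 hidx2
  have hPlen : P.length = A.card := by rw [← hPA, List.toFinset_card_of_nodup hPnd]
  obtain ⟨q, rfl⟩ := SPX_decomp hPnd (by omega) hidx1 hidx2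
  -- axis for D₂ : the reverse
  have hrev : (a₂ :: (q ++ [a₁])).reverse = (a₁ :: q.reverse) ++ [a₂] := by simp
  have hrevnd : ((a₁ :: q.reverse) ++ [a₂]).Nodup := by
    rw [← hrev]; exact List.nodup_reverse.2 hPnd
  have hrevA : ((a₁ :: q.reverse) ++ [a₂]).toFinset = A := by
    rw [← hrev, List.toFinset_reverse]; exact hPA
  have hDrev : D = SPX_SPD ((a₁ :: q.reverse) ++ [a₂]) := by
    rw [← hrev, SPX_SPD_reverse hPnd]; exact hDeqP
  have h1 : bottomRestrict A D a₁ = SPX_SPD (a₂ :: q) :=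
    SPX_split_one (q := a₂ :: q) hPnd hPA hA hDeqP
  have h2 : bottomRestrict A D a₂ = SPX_SPD (a₁ :: q.reverse) :=
    SPX_split_one hrevnd hrevA hA hDrev
  have h3 : bottom2Restrict A D a₁ a₂ = SPX_SPD q :=
    SPX_split_two hPnd hPA hA hDeqP
  have hf1 : (a₂ :: q).toFinset = A.erase a₁ := SPX_toFinset_erase hPnd hPA
  have hf2 : (a₁ :: q.reverse).toFinset = A.erase a₂ := SPX_toFinset_erase hrevnd hrevA
  have hf3 : q.toFinset = A \ {a₁, a₂} := SPX_toFinset_sdiff hPnd hPA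
  have hnd1 : (a₂ :: q).Nodup := by
    have := hPnd
    rw [List.nodup_cons, List.nodup_append] at this
    rw [List.nodup_cons]
    exact ⟨fun hm => this.1 (List.mem_append.2 (Or.inl hm)), this.2.1⟩
  have hnd2 : (a₁ :: q.reverse).Nodup := (List.nodup_append.1 hrevnd).1
  have hnd3 : q.Nodup := hnd1.of_cons
  have M1 : IsMaximalBSPD (A.erase a₁) (bottomRestrict A D a₁) := by
    rw [h1, ← hf1]; exact SPX_isMaxBSPD hnd1
  have M2 : IsMaximalBSPD (A.erase a₂) (bottomRestrict A D a₂) := by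
    rw [h2, ← hf2]; exact SPX_isMaxBSPD hnd2
  have M3 : IsMaximalBSPD (A \ {a₁, a₂}) (bottom2Restrict A D a₁ a₂) := by
    rw [h3, ← hf3]; exact SPX_isMaxBSPD hnd3
  exact ⟨M1.1, M2.1, M3.1, M1, M2, M3⟩
end

section
/- Let D be a maximal ASPD on a finite set A with n = |A| and let V := {{ω(1),…,ω(k)} : ω ∈ D, 1 ≤ k ≤ n} be the regular vine corresponding to D. Then for each a ∈ A, the number of preferences ω ∈ D with ω(1) = a equals the number of maximal chains of the poset V whose minimal element is {a}. -/
variable {α : Type*} [DecidableEq α]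

/-- `T` is covered by `S` in the family `V`, ordered by inclusion. -/
def CoversIn (V : Set (Finset α)) (T S : Finset α) : Prop :=
  T ∈ V ∧ S ∈ V ∧ T ⊂ S ∧ ∀ U ∈ V, T ⊂ U → U ⊂ S → False

/-- `S` is a minimal element of the family `V`, ordered by inclusion. -/
def MinimalIn (V : Set (Finset α)) (S : Finset α) : Prop :=
  S ∈ V ∧ ∀ T ∈ V, T ⊆ S → T = S

/-- `C` is a maximal chain of the family `V`, ordered by inclusion. -/
def IsMaxChainIn (V C : Set (Finset α)) : Prop :=
  C ⊆ V ∧ IsChain (· ⊆ ·) C ∧ ∀ S ∈ V, IsChain (· ⊆ ·) (insert S C) → S ∈ C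

/-- The `i`-th associated graph of a family `V`: vertices are the elements of `V`
of cardinality `i`, and each element of `V` of cardinality `i+1` is an edge
joining the two elements it covers. -/
def vineGraph (V : Set (Finset α)) (i : ℕ) :
    SimpleGraph {S : Finset α // S ∈ V ∧ S.card = i} where
  Adj S T := S ≠ T ∧ ∃ W ∈ V, W.card = i + 1 ∧ CoversIn V S.1 W ∧ CoversIn V T.1 W
  symm := by
    constructor
    rintro S T ⟨h, W, hW, hc, h1, h2⟩
    exact ⟨h.symm, W, hW, hc, h2, h1⟩
  loopless := by
    constructor
    rintro S ⟨h, -⟩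
    exact h rfl

/-- A regular vine on a finite set `A` (poset definition): a family of nonempty
subsets of `A` such that (1) all maximal chains have length `|A| - 1` and all
minimal elements are singletons, (2) there are exactly `|A|` minimal elements,
(3) every non-minimal element covers exactly two elements, (4) each associated
graph is a tree, and (5) proximity holds. -/
def IsRegularVine (A : Finset α) (V : Set (Finset α)) : Prop :=
  (∀ S ∈ V, S ⊆ A ∧ S.Nonempty) ∧
  (∀ C : Set (Finset α), IsMaxChainIn V C → C.ncard = A.card) ∧
  (∀ S, MinimalIn V S → S.card = 1) ∧
  {S | MinimalIn V S}.ncard = A.card ∧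
  (∀ S ∈ V, (∃ T ∈ V, T ⊂ S) → {T | CoversIn V T S}.ncard = 2) ∧
  (∀ i : ℕ, 1 ≤ i → i ≤ A.card - 1 → (vineGraph V i).IsTree) ∧
  (∀ S ∈ V, ∀ T ∈ V, S ≠ T → S.card = T.card → 2 ≤ S.card →
    (∃ W, CoversIn V S W ∧ CoversIn V T W) → ∃ U, CoversIn V U S ∧ CoversIn V U T)

/-- The family of initial segments of the preferences of a domain: the regular
vine corresponding to a maximal Arrow's single-peaked domain. -/
def prefixFamily (D : Set (List α)) : Set (Finset α) :=
  {S | ∃ l ∈ D, ∃ k : ℕ, 1 ≤ k ∧ k ≤ l.length ∧ S = (l.take k).toFinset}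

open List

lemma eq_singleton_of_toFinset {r : List α} (hr : r.Nodup) {z : α}
    (h : r.toFinset = {z}) : r = [z] := by
  match r, hr with
  | [], _ => exact absurd h.symm (Finset.singleton_ne_empty z)
  | [x], _ =>
      have : x ∈ ({z} : Finset α) := h ▸ by simp
      simp_all
  | x :: y :: t, hr =>
      have hx : x ∈ ({z} : Finset α) := h ▸ by simp
      have hy : y ∈ ({z} : Finset α) := h ▸ by simp
      simp only [Finset.mem_singleton] at hx hy
      rw [List.nodup_cons] at hr
      exact absurd (hx.trans hy.symm) (by simp at hr ⊢; tauto)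

lemma take_drop_disjoint {l : List α} (hn : l.Nodup) (k : ℕ) :
    (l.take k).Disjoint (l.drop k) := by
  have := hn
  rw [← take_append_drop k l, nodup_append] at this
  exact fun a ha hb => this.2.2 a ha a hb rfl

lemma restrict_toFinset (l : List α) (T : Finset α) :
    (restrictPref l T).toFinset = l.toFinset ∩ T := by
  simp [restrictPref, toFinset_filter, Finset.filter_mem_eq_inter]

lemma restrict_nodup {l : List α} (hn : l.Nodup) (T : Finset α) :
    (restrictPref l T).Nodup := hn.filter _

lemma restrict_length {l : List α} (hn : l.Nodup) {T : Finset α} (hT : T ⊆ l.toFinset) :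
    (restrictPref l T).length = T.card := by
  rw [← toFinset_card_of_nodup (restrict_nodup hn T), restrict_toFinset,
    Finset.inter_eq_right.mpr hT]

/-- If `z` is the unique element of `X` outside the `k`-prefix of `l`,
then `z` is last in the restriction of `l` to `X`. -/
lemma getLast_restrict_eq {l : List α} (hn : l.Nodup) {X : Finset α}
    (hX : ∀ x ∈ X, x ∈ l) {k : ℕ} {z : α} (hz : z ∈ X)
    (hzk : z ∉ (l.take k).toFinset)
    (hothers : ∀ y ∈ X, y ≠ z → y ∈ (l.take k).toFinset) :
    (restrictPref l X).getLast? = some z := by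
  have hdisj := take_drop_disjoint hn k
  have h2 : restrictPref (l.drop k) X = [z] := by
    apply eq_singleton_of_toFinset (restrict_nodup (hn.sublist (drop_sublist k l)) X)
    ext y
    simp only [restrict_toFinset, Finset.mem_inter, List.mem_toFinset, Finset.mem_singleton]
    constructor
    · rintro ⟨hyd, hyX⟩
      by_contra hne
      exact hdisj (by simpa using hothers y hyX hne) hyd
    · rintro rfl
      refine ⟨?_, hz⟩
      have hyl : y ∈ l := hX y hz
      rw [← take_append_drop k l, mem_append] at hyl
      rcases hyl with h | h
      · exact absurd (by simpa using h) hzk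
      · exact h
  have : restrictPref l X = restrictPref (l.take k) X ++ [z] := by
    rw [← h2, restrictPref, restrictPref, restrictPref, ← filter_append, take_append_drop]
  rw [this, getLast?_concat]

section Main
variable {A : Finset α} {D : Set (List α)}

lemma mem_D_of_avoids (hD : IsMaximalASPD A D)
    (f : (T : Finset α) → T ⊆ A → T.card = 3 → α)
    (hf1 : ∀ T hT h3, f T hT h3 ∈ T)
    (hf2 : ∀ T hT h3, ∀ l ∈ D, (restrictPref l T).getLast? ≠ some (f T hT h3))
    {l : List α} (hl : l ∈ PrefOn A)
    (hav : ∀ T hT h3, (restrictPref l T).getLast? ≠ some (f T hT h3)) : l ∈ D := by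
  by_contra hln
  refine hD.2 l hl hln ⟨?_, ?_⟩
  · exact Set.insert_subset hl hD.1.1
  · intro T hT h3
    refine ⟨f T hT h3, hf1 T hT h3, ?_⟩
    rintro g (rfl | hg)
    · exact hav T hT h3
    · exact hf2 T hT h3 g hg

lemma exists_neverLast (hD : IsMaximalASPD A D) :
    ∃ f : (T : Finset α) → T ⊆ A → T.card = 3 → α,
      (∀ T hT h3, f T hT h3 ∈ T) ∧
      (∀ T hT h3, ∀ l ∈ D, (restrictPref l T).getLast? ≠ some (f T hT h3)) := by
  have h := hD.1.2
  choose f hf1 hf2 using h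
  exact ⟨f, hf1, hf2⟩

lemma pref_length {l : List α} (hl : l ∈ PrefOn A) : l.length = A.card := by
  rw [← hl.2, toFinset_card_of_nodup hl.1]

lemma take_toFinset_subset (l : List α) (k : ℕ) (T : Finset α) (h : l.toFinset = T) :
    (l.take k).toFinset ⊆ T := by
  intro x hx
  rw [← h, List.mem_toFinset]
  exact (take_sublist k l).mem (by simpa using hx)

lemma take_toFinset_card {l : List α} (hn : l.Nodup) {k : ℕ} (hk : k ≤ l.length) :
    (l.take k).toFinset.card = k := by
  rw [toFinset_card_of_nodup (hn.sublist (take_sublist k l)), length_take]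
  omega

/-- The merge of two preferences of `D` along a prefix of the second is in `D`. -/
lemma merge_mem (hD : IsMaximalASPD A D) {l l' : List α} (hl : l ∈ D) (hl' : l' ∈ D)
    (t : ℕ) :
    restrictPref l (l'.take t).toFinset ++ l'.drop t ∈ D := by
  obtain ⟨f, hf1, hf2⟩ := exists_neverLast hD
  have hlP : l ∈ PrefOn A := hD.1.1 hl
  have hl'P : l' ∈ PrefOn A := hD.1.1 hl'
  set T : Finset α := (l'.take t).toFinset with hT
  set m : List α := restrictPref l T ++ l'.drop t with hm
  have hTA : T ⊆ A := take_toFinset_subset l' t A hl'P.2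
  have hflT : (restrictPref l T).toFinset = T := by
    rw [restrict_toFinset, hlP.2, Finset.inter_eq_right.mpr hTA]
  have hdisj' := take_drop_disjoint hl'P.1 t
  have hdropT : ∀ x ∈ l'.drop t, x ∉ T := by
    intro x hx hxT
    exact hdisj' (by simpa [hT] using hxT) hx
  have hmnd : m.Nodup := by
    rw [hm, nodup_append]
    refine ⟨restrict_nodup hlP.1 T, hl'P.1.sublist (drop_sublist t l'), ?_⟩
    intro x hx y hx2 hxy
    subst hxy
    have : x ∈ T := by
      have := List.mem_toFinset.mpr hx
      rw [hflT] at this; exact this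
    exact hdropT x hx2 this
  have hmfin : m.toFinset = A := by
    rw [hm, toFinset_append, hflT]
    apply Finset.Subset.antisymm
    · apply Finset.union_subset hTA
      intro x hx
      rw [← hl'P.2, List.mem_toFinset] at *
      exact (drop_sublist t l').mem (by simpa using hx)
    · intro x hxA
      have : x ∈ l' := by rw [← List.mem_toFinset, hl'P.2]; exact hxA
      rw [← take_append_drop t l', mem_append] at this
      rcases this with h | h
      · exact Finset.mem_union_left _ (by simpa [hT] using h)
      · exact Finset.mem_union_right _ (by simpa using h)
  have hmP : m ∈ PrefOn A := ⟨hmnd, hmfin⟩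
  apply mem_D_of_avoids hD f hf1 hf2 hmP
  intro X hX h3
  by_cases hXT : X ⊆ T
  · have : restrictPref m X = restrictPref l X := by
      rw [hm, restrictPref, filter_append]
      have h1 : List.filter (fun a => decide (a ∈ X)) (restrictPref l T)
          = List.filter (fun a => decide (a ∈ X)) l := by
        rw [restrictPref, List.filter_filter]
        apply List.filter_congr
        intro x _
        by_cases hx : x ∈ X
        · simp [hx, hXT hx]
        · simp [hx]
      have h2 : List.filter (fun a => decide (a ∈ X)) (l'.drop t) = [] := by
        rw [List.filter_eq_nil_iff]
        intro x hx
        simp only [decide_eq_true_eq]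
        exact fun hxX => hdropT x hx (hXT hxX)
      rw [h1, h2, append_nil, restrictPref]
    rw [this]
    exact hf2 X hX h3 l hl
  · obtain ⟨w, hwX, hwT⟩ := Finset.not_subset.mp hXT
    have hwd : w ∈ l'.drop t := by
      have : w ∈ l' := by rw [← List.mem_toFinset, hl'P.2]; exact hX hwX
      rw [← take_append_drop t l', mem_append] at this
      rcases this with h | h
      · exact absurd (by simpa [hT] using h) hwT
      · exact h
    have hne : restrictPref (l'.drop t) X ≠ [] := by
      intro hnil
      have : w ∈ List.filter (fun a => decide (a ∈ X)) (l'.drop t) :=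
        mem_filter.mpr ⟨hwd, by simpa using hwX⟩
      rw [restrictPref] at hnil
      rw [hnil] at this
      exact List.not_mem_nil this
    have hc : (restrictPref (l'.drop t) X).getLast?
        = some ((restrictPref (l'.drop t) X).getLast hne) := getLast?_eq_getLast hne
    set c := (restrictPref (l'.drop t) X).getLast hne with hcd
    have hmX : (restrictPref m X).getLast? = some c := by
      rw [hm, restrictPref, filter_append, getLast?_append,
        show List.filter (fun a => decide (a ∈ X)) (l'.drop t)
          = restrictPref (l'.drop t) X from rfl, hc]
      rfl
    have hl'X : (restrictPref l' X).getLast? = some c := by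
      conv_lhs => rw [restrictPref, ← take_append_drop t l', filter_append]
      rw [getLast?_append,
        show List.filter (fun a => decide (a ∈ X)) (l'.drop t)
          = restrictPref (l'.drop t) X from rfl, hc]
      rfl
    rw [hmX]
    intro heq
    exact hf2 X hX h3 l' hl' (hl'X.trans heq)

/-- Gradedness: between two nested prefix sets with a card gap there is an
intermediate prefix set. -/
lemma exists_between_pref (hD : IsMaximalASPD A D) {S T : Finset α}
    (hS : S ∈ prefixFamily D) (hT : T ∈ prefixFamily D)
    (hST : S ⊆ T) (hgap : S.card + 1 < T.card) :
    ∃ U ∈ prefixFamily D, S ⊂ U ∧ U ⊂ T ∧ U.card = S.card + 1 := by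
  obtain ⟨l, hl, s, hs1, hsl, rfl⟩ := hS
  obtain ⟨l', hl', t, ht1, htl, rfl⟩ := hT
  have hlP : l ∈ PrefOn A := hD.1.1 hl
  have hl'P : l' ∈ PrefOn A := hD.1.1 hl'
  set S : Finset α := (l.take s).toFinset with hSd
  set T : Finset α := (l'.take t).toFinset with hTd
  have hScard : S.card = s := take_toFinset_card hlP.1 hsl
  have hTcard : T.card = t := take_toFinset_card hl'P.1 htl
  set m : List α := restrictPref l T ++ l'.drop t with hmd
  have hm : m ∈ D := merge_mem hD hl hl' t
  have hmP : m ∈ PrefOn A := hD.1.1 hm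
  have hTA : T ⊆ A := take_toFinset_subset l' t A hl'P.2
  have hflT : (restrictPref l T).toFinset = T := by
    rw [restrict_toFinset, hlP.2, Finset.inter_eq_right.mpr hTA]
  have hlenT : (restrictPref l T).length = t := by
    rw [← toFinset_card_of_nodup (restrict_nodup hlP.1 T), hflT, hTcard]
  -- decompose restrictPref l T = take s l ++ r
  have hsplit : restrictPref l T = l.take s ++ restrictPref (l.drop s) T := by
    conv_lhs => rw [restrictPref, ← take_append_drop s l, filter_append]
    congr 1
    rw [List.filter_eq_self]
    intro x hx
    simp only [decide_eq_true_eq]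
    exact hST (by simpa [hSd] using List.mem_toFinset.mpr hx)
  set r : List α := restrictPref (l.drop s) T with hrd
  have hlents : (l.take s).length = s := by rw [length_take]; omega
  have hrlen : s + r.length = t := by
    rw [← hlenT, hsplit, length_append, hlents]
  have hrne : r ≠ [] := by
    intro h
    rw [h] at hrlen
    simp at hrlen
    omega
  obtain ⟨u, r', hur⟩ := List.exists_cons_of_ne_nil hrne
  have hu_r : u ∈ r := by rw [hur]; exact mem_cons_self
  have huT : u ∈ T := by
    have := List.mem_filter.mp (by rw [hrd, restrictPref] at hu_r; exact hu_r)
    simpa using this.2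
  have huS : u ∉ S := by
    intro huS
    have h1 : u ∈ l.take s := by simpa [hSd] using huS
    have h2 : u ∈ l.drop s := by
      have := List.mem_filter.mp (by rw [hrd, restrictPref] at hu_r; exact hu_r)
      exact this.1
    exact take_drop_disjoint hlP.1 s h1 h2
  have htake : m.take (s+1) = l.take s ++ [u] := by
    rw [hmd, take_append_of_le_length (by omega : s + 1 ≤ (restrictPref l T).length),
      hsplit, take_append, take_of_length_le (by omega), hlents]
    congr 1
    rw [hur]
    simp [Nat.sub_self]
  have htA : t ≤ A.card := by rw [← pref_length hl'P]; exact htl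
  refine ⟨(m.take (s+1)).toFinset, ⟨m, hm, s+1, by omega, ?_, rfl⟩, ?_, ?_, ?_⟩
  · rw [pref_length hmP]; omega
  · rw [htake, toFinset_append]
    simp only [toFinset_cons, toFinset_nil]
    rw [← hSd]
    constructor
    · intro x hx; exact Finset.mem_union_left _ hx
    · intro hsub
      exact huS (by simpa using hsub (Finset.mem_union_right _ (by simp)))
  · constructor
    · rw [htake, toFinset_append]
      apply Finset.union_subset (hST)
      simpa using huT
    · intro hsub
      have h1 : T.card ≤ (m.take (s+1)).toFinset.card := Finset.card_le_card hsub
      have h2 : (m.take (s+1)).toFinset.card = s + 1 := by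
        apply take_toFinset_card hmP.1
        rw [pref_length hmP]; omega
      omega
  · rw [hScard]
    apply take_toFinset_card hmP.1
    rw [pref_length hmP]; omega

/-- The maximal chain associated with a preference. -/
def prefChain (l : List α) : Set (Finset α) :=
  {S | ∃ k : ℕ, 1 ≤ k ∧ k ≤ l.length ∧ S = (l.take k).toFinset}

lemma prefixFamily_bounds (hD : IsMaximalASPD A D) {S : Finset α}
    (hS : S ∈ prefixFamily D) : S ⊆ A ∧ 1 ≤ S.card ∧ S.card ≤ A.card := by
  obtain ⟨l, hl, k, hk1, hkl, rfl⟩ := hS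
  have hlP : l ∈ PrefOn A := hD.1.1 hl
  have hc : (l.take k).toFinset.card = k := take_toFinset_card hlP.1 hkl
  exact ⟨take_toFinset_subset l k A hlP.2, by omega, by rw [hc, ← pref_length hlP]; exact hkl⟩

lemma take_toFinset_mono (l : List α) {j k : ℕ} (hjk : j ≤ k) :
    (l.take j).toFinset ⊆ (l.take k).toFinset := by
  intro x hx
  rw [List.mem_toFinset] at *
  have : l.take j = (l.take k).take j := by rw [take_take, Nat.min_eq_left hjk]
  rw [this] at hx
  exact (take_sublist j (l.take k)).mem hx

lemma prefChain_isMaxChain (hD : IsMaximalASPD A D) {l : List α} (hl : l ∈ D) :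
    IsMaxChainIn (prefixFamily D) (prefChain l) := by
  have hlP : l ∈ PrefOn A := hD.1.1 hl
  refine ⟨?_, ?_, ?_⟩
  · rintro S ⟨k, hk1, hkl, rfl⟩
    exact ⟨l, hl, k, hk1, hkl, rfl⟩
  · rintro S ⟨k, hk1, hkl, rfl⟩ T ⟨k', hk1', hkl', rfl⟩ hne
    rcases le_total k k' with h | h
    · exact Or.inl (take_toFinset_mono l h)
    · exact Or.inr (take_toFinset_mono l h)
  · intro S hS hchain
    have hb := prefixFamily_bounds hD hS
    have hmem : (l.take S.card).toFinset ∈ prefChain l :=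
      ⟨S.card, hb.2.1, by rw [pref_length hlP]; exact hb.2.2, rfl⟩
    have hcard : (l.take S.card).toFinset.card = S.card :=
      take_toFinset_card hlP.1 (by rw [pref_length hlP]; exact hb.2.2)
    by_cases heq : S = (l.take S.card).toFinset
    · rw [heq]; exact hmem
    · rcases hchain (Set.mem_insert S _) (Set.mem_insert_of_mem _ hmem) heq with h | h
      · rw [Finset.eq_of_subset_of_card_le h (by omega)]; exact hmem
      · rw [← Finset.eq_of_subset_of_card_le h (by omega)]; exact hmem

lemma head_take {l : List α} {a : α} (hhead : l.head? = some a) {k : ℕ} (hk : 1 ≤ k) :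
    a ∈ (l.take k).toFinset := by
  obtain ⟨t, rfl⟩ : ∃ t, l = a :: t := by
    cases l with
    | nil => simp at hhead
    | cons x t => simp at hhead; exact ⟨t, by rw [hhead]⟩
  obtain ⟨k', rfl⟩ : ∃ k', k = k' + 1 := ⟨k - 1, by omega⟩
  simp [List.take_succ_cons]

lemma singleton_mem_prefChain {l : List α} {a : α} (hhead : l.head? = some a)
    (hlen : 1 ≤ l.length) : ({a} : Finset α) ∈ prefChain l := by
  obtain ⟨t, rfl⟩ : ∃ t, l = a :: t := by
    cases l with
    | nil => simp at hhead
    | cons x t => simp at hhead; exact ⟨t, by rw [hhead]⟩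
  exact ⟨1, le_refl 1, hlen, by simp⟩

lemma take_succ_toFinset {l : List α} {i : ℕ} (hi : i < l.length) :
    (l.take (i+1)).toFinset = insert l[i] (l.take i).toFinset := by
  have h1 : l.take (i+1) = l.take i ++ [l[i]] := by
    rw [List.take_succ, List.getElem?_eq_getElem hi]; rfl
  rw [h1, toFinset_append]
  ext x; simp [or_comm]

lemma getElem_not_mem_take {l : List α} (hn : l.Nodup) {i : ℕ} (hi : i < l.length) :
    l[i] ∉ (l.take i).toFinset := by
  intro h
  rw [List.mem_toFinset] at h
  apply take_drop_disjoint hn i h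
  have h0 : (l.drop i)[0]'(by rw [length_drop]; omega) = l[i] := by
    simp [List.getElem_drop]
  rw [← h0]
  exact List.getElem_mem _

lemma prefChain_inj (hD : IsMaximalASPD A D) {l l' : List α}
    (hl : l ∈ PrefOn A) (hl' : l' ∈ PrefOn A) (h : prefChain l = prefChain l') :
    l = l' := by
  have hlen : l.length = l'.length := by rw [pref_length hl, pref_length hl']
  have htake : ∀ k, (l.take k).toFinset = (l'.take k).toFinset := by
    intro k
    rcases Nat.eq_zero_or_pos k with rfl | hk1
    · simp
    rcases le_or_gt k l.length with hkl | hkl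
    · have : (l.take k).toFinset ∈ prefChain l' := h ▸ ⟨k, hk1, hkl, rfl⟩
      obtain ⟨j, hj1, hjl, hj⟩ := this
      have hcard : (l.take k).toFinset.card = k := take_toFinset_card hl.1 hkl
      have hcard' : (l'.take j).toFinset.card = j := take_toFinset_card hl'.1 hjl
      have : j = k := by rw [hj] at hcard; omega
      rw [hj, this]
    · rw [take_of_length_le (by omega), take_of_length_le (by omega), hl.2, hl'.2]
  apply List.ext_getElem hlen
  intro i hi hi'
  have h1 := take_succ_toFinset hi
  have h2 := take_succ_toFinset hi'
  rw [← htake (i+1), ← htake i] at h2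
  have : l[i] ∈ insert l'[i] (l.take i).toFinset := by
    rw [← h2, h1]
    exact Finset.mem_insert_self _ _
  rcases Finset.mem_insert.mp this with h3 | h3
  · exact h3
  · exact absurd h3 (getElem_not_mem_take hl.1 hi)

lemma chain_realized (hD : IsMaximalASPD A D) {a : α} (ha : a ∈ A) {C : Set (Finset α)}
    (hC : IsMaxChainIn (prefixFamily D) C) (haC : ({a} : Finset α) ∈ C)
    (hmin : ∀ S ∈ C, ({a} : Finset α) ⊆ S) :
    ∃ l : List α, l ∈ D ∧ l.head? = some a ∧ prefChain l = C := by
  classical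
  set n := A.card with hn_def
  have hn : 1 ≤ n := Finset.card_pos.mpr ⟨a, ha⟩
  obtain ⟨l0, hl0, -⟩ := hC.1 haC
  have hl0P : l0 ∈ PrefOn A := hD.1.1 hl0
  have hAV : A ∈ prefixFamily D := by
    refine ⟨l0, hl0, l0.length, by rw [pref_length hl0P]; omega, le_refl _, ?_⟩
    rw [take_length, hl0P.2]
  have hAC : A ∈ C := by
    apply hC.2.2 A hAV
    exact hC.2.1.insert fun b hb _ => Or.inr (prefixFamily_bounds hD (hC.1 hb)).1
  have hCfin : C.Finite := by
    apply Set.Finite.subset (A.powerset : Finset (Finset α)).finite_toSet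
    intro S hS
    simpa [Finset.mem_powerset] using (prefixFamily_bounds hD (hC.1 hS)).1
  have hcomp : ∀ S ∈ C, ∀ T ∈ C, S ⊆ T ∨ T ⊆ S := by
    intro S hS T hT
    by_cases h : S = T
    · exact Or.inl (h ▸ Finset.Subset.refl S)
    · exact hC.2.1 hS hT h
  have huniq : ∀ S ∈ C, ∀ T ∈ C, S.card = T.card → S = T := by
    intro S hS T hT hcard
    rcases hcomp S hS T hT with h | h
    · exact Finset.eq_of_subset_of_card_le h (by omega)
    · exact (Finset.eq_of_subset_of_card_le h (by omega)).symm
  have hex : ∀ k, 1 ≤ k → k ≤ n → ∃ S, S ∈ C ∧ S.card = k := by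
    intro k hk1 hkn
    by_contra hcon
    push_neg at hcon
    have hk2 : 2 ≤ k := by
      rcases Nat.lt_or_ge k 2 with h | h
      · have : k = 1 := by omega
        exact absurd (by simp : ({a} : Finset α).card = k ∨ True) (by
          intro _
          exact hcon {a} haC (by simp [this]))
      · exact h
    obtain ⟨S, hSlow, hSmax⟩ := Set.exists_max_image {X | X ∈ C ∧ X.card < k} Finset.card
      (hCfin.subset fun x hx => hx.1) ⟨{a}, haC, by simp; omega⟩
    obtain ⟨T, hThigh, hTmin⟩ := Set.exists_min_image {X | X ∈ C ∧ k ≤ X.card} Finset.card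
      (hCfin.subset fun x hx => hx.1) ⟨A, hAC, hkn⟩
    have hlow_sub : ∀ X ∈ C, X.card < k → X ⊆ S := by
      intro X hX hXk
      rcases hcomp X hX S hSlow.1 with h | h
      · exact h
      · rw [Finset.eq_of_subset_of_card_le h (hSmax X ⟨hX, hXk⟩)]
    have hhigh_sub : ∀ X ∈ C, k ≤ X.card → T ⊆ X := by
      intro X hX hXk
      rcases hcomp T hThigh.1 X hX with h | h
      · exact h
      · rw [Finset.eq_of_subset_of_card_le h (hTmin X ⟨hX, hXk⟩)]
    have hST : S ⊆ T := by
      rcases hcomp S hSlow.1 T hThigh.1 with h | h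
      · exact h
      · have h1 := Finset.card_le_card h
        have := hSlow.2; have := hThigh.2; omega
    have hgap : S.card + 1 < T.card := by
      have h1 := hSlow.2
      have h2 := hThigh.2
      have h3 := hcon T hThigh.1
      omega
    obtain ⟨U, hUV, hSU, hUT, hUcard⟩ :=
      exists_between_pref hD (hC.1 hSlow.1) (hC.1 hThigh.1) hST hgap
    have hUC : U ∈ C := by
      apply hC.2.2 U hUV
      apply hC.2.1.insert
      intro b hb hne
      by_cases hbk : b.card < k
      · exact Or.inr ((hlow_sub b hb hbk).trans hSU.1)
      · exact Or.inl (hUT.1.trans (hhigh_sub b hb (le_of_not_gt hbk)))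
    have h1 := hcon U hUC
    have h2 := hSlow.2
    have h3 : U.card ≤ S.card := by
      apply hSmax U ⟨hUC, ?_⟩
      omega
    omega
  have hex' : ∀ k : ℕ, ∃ S : Finset α, (k = 0 → S = ∅) ∧ (1 ≤ k → k ≤ n → S ∈ C ∧ S.card = k) := by
    intro k
    by_cases h0 : k = 0
    · exact ⟨∅, fun _ => rfl, by omega⟩
    by_cases hkn : k ≤ n
    · obtain ⟨S, hS1, hS2⟩ := hex k (by omega) hkn
      exact ⟨S, fun h => absurd h h0, fun _ _ => ⟨hS1, hS2⟩⟩
    · exact ⟨∅, fun h => absurd h h0, fun _ h2 => absurd h2 hkn⟩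
  choose F hF0 hF using hex'
  have hFC : ∀ k, 1 ≤ k → k ≤ n → F k ∈ C := fun k h1 h2 => (hF k h1 h2).1
  have hFcard : ∀ k, 1 ≤ k → k ≤ n → (F k).card = k := fun k h1 h2 => (hF k h1 h2).2
  have hmono : ∀ j k, j ≤ k → k ≤ n → F j ⊆ F k := by
    intro j k hjk hkn
    rcases Nat.eq_zero_or_pos j with rfl | hj1
    · rw [hF0 0 rfl]; exact Finset.empty_subset _
    rcases Nat.eq_or_lt_of_le hjk with rfl | hlt
    · exact Finset.Subset.refl _
    rcases hcomp (F j) (hFC j hj1 (by omega)) (F k) (hFC k (by omega) hkn) with h | h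
    · exact h
    · rw [Finset.eq_of_subset_of_card_le h
        (by rw [hFcard j hj1 (by omega), hFcard k (by omega) hkn]; omega)]
  have hex'' : ∀ k : ℕ, ∃ x : α, k < n → F (k+1) \ F k = {x} := by
    intro k
    by_cases hk : k < n
    · have hsub : F k ⊆ F (k+1) := hmono k (k+1) (by omega) (by omega)
      have hcard1 : (F (k+1) \ F k).card = 1 := by
        rw [Finset.card_sdiff_of_subset hsub]
        rcases Nat.eq_zero_or_pos k with rfl | hk1
        · rw [hF0 0 rfl, hFcard 1 (le_refl _) (by omega)]; simp
        · rw [hFcard k hk1 (by omega), hFcard (k+1) (by omega) (by omega)]; omega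
      obtain ⟨x, hx⟩ := Finset.card_eq_one.mp hcard1
      exact ⟨x, fun _ => hx⟩
    · exact ⟨a, fun h => absurd h hk⟩
  choose g hg using hex''
  set l : List α := List.ofFn (fun i : Fin n => g i.val) with hl_def
  have hllen : l.length = n := by rw [hl_def, List.length_ofFn]
  have hgetl : ∀ i : ℕ, ∀ hi : i < l.length, l[i] = g i := by
    intro i hi
    simp only [hl_def, List.getElem_ofFn]
  have htakeF : ∀ k, k ≤ n → (l.take k).toFinset = F k := by
    intro k
    induction k with
    | zero => intro _; simp [hF0 0 rfl]
    | succ k ih =>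
      intro hk
      have hk' : k < n := by omega
      rw [take_succ_toFinset (show k < l.length by omega), ih (by omega),
        hgetl k (by omega)]
      have h2 := hg k hk'
      have h3 : F k ⊆ F (k+1) := hmono k (k+1) (by omega) (by omega)
      rw [← Finset.union_sdiff_of_subset h3, h2]
      ext x; simp [or_comm]
  have hkey : ∀ i j : ℕ, i < j → j < n → g i ≠ g j := by
    intro i j hij hjn heq
    have h1 : g i ∈ F (i+1) := by
      have := hg i (by omega)
      have : g i ∈ F (i+1) \ F i := this ▸ Finset.mem_singleton_self _
      exact (Finset.mem_sdiff.mp this).1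
    have h2 : g i ∈ F j := hmono (i+1) j (by omega) (by omega) h1
    have h3 : g j ∉ F j := by
      have := hg j hjn
      have : g j ∈ F (j+1) \ F j := this ▸ Finset.mem_singleton_self _
      exact (Finset.mem_sdiff.mp this).2
    rw [heq] at h2
    exact h3 h2
  have hnodup : l.Nodup := by
    rw [hl_def, nodup_ofFn]
    intro i j heq
    by_contra hne
    rcases lt_trichotomy i.val j.val with h | h | h
    · exact hkey i.val j.val h j.isLt heq
    · exact hne (Fin.ext h)
    · exact hkey j.val i.val h i.isLt heq.symm
  have hFnA : F n = A := by
    have h1 : F n ∈ C := hFC n hn (le_refl _)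
    have h2 : F n ⊆ A := (prefixFamily_bounds hD (hC.1 h1)).1
    exact Finset.eq_of_subset_of_card_le h2 (by rw [hFcard n hn (le_refl _)])
  have hltf : l.toFinset = A := by
    have h5 := htakeF n (le_refl n)
    rw [take_of_length_le (by omega)] at h5
    rw [h5, hFnA]
  have hlP : l ∈ PrefOn A := ⟨hnodup, hltf⟩
  have hF1 : F 1 = {a} := by
    have h1 : F 1 ∈ C := hFC 1 (le_refl _) hn
    have h2 : ({a} : Finset α) ⊆ F 1 := hmin (F 1) h1
    exact (Finset.eq_of_subset_of_card_le h2 (by rw [hFcard 1 (le_refl _) hn]; simp)).symm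
  have hhead : l.head? = some a := by
    have hne : l ≠ [] := by
      intro h; rw [h] at hllen; simp at hllen; omega
    rw [List.head?_eq_head hne, List.head_eq_getElem hne, hgetl 0 (by omega)]
    have h1 : g 0 ∈ F 1 := by
      have := hg 0 (by omega)
      have : g 0 ∈ F 1 \ F 0 := this ▸ Finset.mem_singleton_self _
      exact (Finset.mem_sdiff.mp this).1
    rw [hF1] at h1
    simp at h1
    rw [h1]
  have hlD : l ∈ D := by
    obtain ⟨f, hf1, hf2⟩ := exists_neverLast hD
    apply mem_D_of_avoids hD f hf1 hf2 hlP
    intro X hXA h3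
    have hP : ∃ j, X ⊆ F j ∧ j ≤ n := ⟨n, by rw [hFnA]; exact hXA, le_refl _⟩
    obtain ⟨hXFj, hjn⟩ := Nat.find_spec hP
    set j := Nat.find hP with hj_def
    have hj3 : 3 ≤ j := by
      by_contra hcon
      rcases Nat.lt_or_ge j 1 with h | h
      · have : j = 0 := by omega
        rw [this, hF0 0 rfl] at hXFj
        have := Finset.card_le_card hXFj
        simp [h3] at this
      · have := Finset.card_le_card hXFj
        rw [hFcard j h hjn, h3] at this
        omega
    have hnot : ¬ X ⊆ F (j-1) := by
      intro h
      exact Nat.find_min hP (show j - 1 < j by omega) ⟨h, by omega⟩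
    obtain ⟨z, hzX, hzF⟩ := Finset.not_subset.mp hnot
    have hstepj := hg (j-1) (show j - 1 < n by omega)
    rw [show j - 1 + 1 = j by omega] at hstepj
    have hz_eq : ∀ y ∈ X, y ∉ F (j-1) → y = g (j-1) := by
      intro y hy hyF
      have : y ∈ F j \ F (j-1) := Finset.mem_sdiff.mpr ⟨hXFj hy, hyF⟩
      rw [hstepj] at this
      simpa using this
    have hzg := hz_eq z hzX hzF
    have hothers : ∀ y ∈ X, y ≠ z → y ∈ F (j-1) := by
      intro y hy hne
      by_contra hyF
      exact hne ((hz_eq y hy hyF).trans hzg.symm)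
    have hXl : ∀ x ∈ X, x ∈ l := fun x hx => by
      rw [← List.mem_toFinset, hltf]; exact hXA hx
    have hlast : (restrictPref l X).getLast? = some z := by
      apply getLast_restrict_eq hnodup hXl hzX
      · rw [htakeF (j-1) (by omega)]; exact hzF
      · intro y hy hne
        rw [htakeF (j-1) (by omega)]
        exact hothers y hy hne
    have hFj1V : F (j-1) ∈ prefixFamily D := hC.1 (hFC (j-1) (by omega) (by omega))
    obtain ⟨p, hp, kk, hkk1, hkkl, hkkF⟩ := hFj1V
    have hpP : p ∈ PrefOn A := hD.1.1 hp
    have hlastp : (restrictPref p X).getLast? = some z := by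
      apply getLast_restrict_eq hpP.1
        (fun x hx => by rw [← List.mem_toFinset, hpP.2]; exact hXA hx) hzX
      · rw [← hkkF]; exact hzF
      · intro y hy hne
        rw [← hkkF]
        exact hothers y hy hne
    rw [hlast]
    intro heq
    exact hf2 X hXA h3 p hp (hlastp.trans heq)
  refine ⟨l, hlD, hhead, ?_⟩
  ext W
  constructor
  · rintro ⟨k, hk1, hkl, rfl⟩
    rw [htakeF k (by omega)]
    exact hFC k hk1 (by omega)
  · intro hW
    have hb := prefixFamily_bounds hD (hC.1 hW)
    have hWF : W = F W.card := huniq W hW (F W.card)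
      (hFC W.card hb.2.1 hb.2.2) (hFcard W.card hb.2.1 hb.2.2).symm
    exact ⟨W.card, hb.2.1, by omega, by rw [htakeF W.card hb.2.2, ← hWF]⟩

end Main

/-- The number of preferences of a maximal Arrow's single-peaked domain having
first-ranked alternative `a` equals the number of maximal chains of the
corresponding regular vine whose minimal element is `{a}`. -/
theorem first_rank_eq_chain_count (A : Finset α) (D : Set (List α))
    (hD : IsMaximalASPD A D) (a : α) (ha : a ∈ A) :
    {l | l ∈ D ∧ l.head? = some a}.ncard =
      {C : Set (Finset α) | IsMaxChainIn (prefixFamily D) C ∧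
        ({a} : Finset α) ∈ C ∧ ∀ S ∈ C, ({a} : Finset α) ⊆ S}.ncard := by
  have himg : {C : Set (Finset α) | IsMaxChainIn (prefixFamily D) C ∧
      ({a} : Finset α) ∈ C ∧ ∀ S ∈ C, ({a} : Finset α) ⊆ S}
      = prefChain '' {l | l ∈ D ∧ l.head? = some a} := by
    ext C
    constructor
    · rintro ⟨hC, haC, hmin⟩
      obtain ⟨l, hlD, hhead, hchain⟩ := chain_realized hD ha hC haC hmin
      exact ⟨l, ⟨hlD, hhead⟩, hchain⟩
    · rintro ⟨l, ⟨hlD, hhead⟩, rfl⟩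
      have hlP := hD.1.1 hlD
      have hlen : 1 ≤ l.length := by
        rw [pref_length hlP]
        exact Finset.card_pos.mpr ⟨a, ha⟩
      refine ⟨prefChain_isMaxChain hD hlD, singleton_mem_prefChain hhead hlen, ?_⟩
      rintro S ⟨k, hk1, hkl, rfl⟩
      rw [Finset.singleton_subset_iff]
      exact head_take hhead hk1
  rw [himg, Set.ncard_image_of_injOn]
  intro l hl l' hl' h
  exact prefChain_inj hD (hD.1.1 hl.1) (hD.1.1 hl'.1) h
end
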